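/- arXiv:1302.2347 — 8 statements merged into one kernel-verified Lean document; each statement's English description precedes it below -/
import Mathlib

section
/- For each n, let ε_0, ε_1, …, ε_n be independent random signs, each equal to +1 or −1 with probability 1/2, let P_n(x) = Σ_{m=0}^n C(n,m) ε_m cos(mx), let M_n = sup_{0 ≤ x ≤ 2π} |P_n(x)|, and let R_n = Σ_{m=0}^n C(n,m)². Then the probability of the event M_n ≤ 2·√(R_n · ln n) tends to 1 as n → ∞. -/
open MeasureTheory Finset Filter Real
open scoped ENNReal NNReal

/-- The uniform probability measure on sign vectors, encoded as `Fin (n+1) → Bool`. -/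
noncomputable def signs (n : ℕ) : Measure (Fin (n+1) → Bool) :=
  (PMF.uniformOfFintype (Fin (n+1) → Bool)).toMeasure

/-- The `m`-th random sign: `+1` or `-1`, each with probability `1/2`,
independent across coordinates under `signs n`. -/
noncomputable def eps {n : ℕ} (ω : Fin (n+1) → Bool) (m : Fin (n+1)) : ℝ :=
  if ω m then 1 else -1

/-- The random trigonometric polynomial `P_n(x) = ∑_{m=0}^n C(n,m) ε_m cos (m x)`. -/
noncomputable def P (n : ℕ) (ω : Fin (n+1) → Bool) (x : ℝ) : ℝ :=
  ∑ m : Fin (n+1), (n.choose m : ℝ) * eps ω m * Real.cos (m * x)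

/-- `M_n = sup_{0 ≤ x ≤ 2π} |P_n(x)|`. -/
noncomputable def M (n : ℕ) (ω : Fin (n+1) → Bool) : ℝ :=
  ⨆ x : Set.Icc (0:ℝ) (2*π), |P n ω x|

/-- `R_n = ∑_{m=0}^n C(n,m)²`. -/
noncomputable def R (n : ℕ) : ℝ :=
  ∑ m ∈ range (n+1), (n.choose m : ℝ)^2

/- ### Auxiliary lemmas -/

lemma meas_all {n : ℕ} (s : Set (Fin (n+1) → Bool)) : MeasurableSet s :=
  s.to_countable.measurableSet

lemma abs_eps {n : ℕ} (ω : Fin (n+1) → Bool) (m : Fin (n+1)) : |eps ω m| = 1 := by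
  rw [eps]; split <;> norm_num

lemma R_eq (n : ℕ) : R n = (Nat.centralBinom n : ℝ) := by
  have h : Nat.centralBinom n = ∑ m ∈ range (n+1), (n.choose m)^2 := by
    rw [Nat.centralBinom, two_mul, Nat.add_choose_eq]
    rw [Finset.Nat.sum_antidiagonal_eq_sum_range_succ (f := fun i j => n.choose i * n.choose j)]
    exact Finset.sum_congr rfl fun i hi => by
      rw [Nat.choose_symm (Nat.lt_succ_iff.mp (mem_range.mp hi)), sq]
  rw [R, h]
  push_cast
  rfl

lemma R_pos (n : ℕ) : 0 < R n := by
  rw [R_eq]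
  exact_mod_cast Nat.centralBinom_pos n

/-- factorization of the sum of exponentials over sign vectors -/
lemma sum_exp_eps (n : ℕ) (c : Fin (n+1) → ℝ) :
    ∑ ω : Fin (n+1) → Bool, Real.exp (∑ m, c m * eps ω m)
      = ∏ m : Fin (n+1), (Real.exp (c m) + Real.exp (-(c m))) := by
  have h : ∀ ω : Fin (n+1) → Bool, Real.exp (∑ m, c m * eps ω m)
      = ∏ m : Fin (n+1), Real.exp (c m * (if ω m then 1 else -1)) := by
    intro ω
    rw [Real.exp_sum]
    rfl
  simp_rw [h]
  rw [← Fintype.piFinset_univ,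
    ← Finset.prod_univ_sum (fun _ : Fin (n+1) => (univ : Finset Bool))
      (fun m y => Real.exp (c m * (if y then 1 else -1)))]
  refine Finset.prod_congr rfl fun m _ => ?_
  rw [Fintype.sum_bool]
  norm_num

lemma sum_exp_le (n : ℕ) (c : Fin (n+1) → ℝ) :
    ∑ ω : Fin (n+1) → Bool, Real.exp (∑ m, c m * eps ω m)
      ≤ 2^(n+1) * Real.exp ((∑ m : Fin (n+1), (c m)^2) / 2) := by
  rw [sum_exp_eps]
  calc ∏ m : Fin (n+1), (Real.exp (c m) + Real.exp (-(c m)))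
      ≤ ∏ m : Fin (n+1), 2 * Real.exp ((c m)^2 / 2) := by
        refine Finset.prod_le_prod (fun m _ => by positivity) (fun m _ => ?_)
        have h1 : Real.exp (c m) + Real.exp (-(c m)) = 2 * Real.cosh (c m) := by
          rw [Real.cosh_eq]; ring
        rw [h1]
        have := Real.cosh_le_exp_half_sq (c m)
        linarith
    _ = 2^(n+1) * Real.exp ((∑ m : Fin (n+1), (c m)^2) / 2) := by
        rw [Finset.prod_mul_distrib, Finset.prod_const, ← Real.exp_sum]
        simp [Finset.sum_div]

open scoped Classical in
lemma card_filter_le (n : ℕ) (a : Fin (n+1) → ℝ) (t V : ℝ) (ht : 0 < t) (hV : 0 < V)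
    (hA : ∑ m : Fin (n+1), (a m)^2 ≤ V) :
    (((univ : Finset (Fin (n+1) → Bool)).filter
        fun ω => t ≤ |∑ m : Fin (n+1), a m * eps ω m|).card : ℝ)
      ≤ 2^(n+1) * (2 * Real.exp (-(t^2) / (2*V))) := by
  set l := t / V with hl
  have hl0 : 0 < l := div_pos ht hV
  set S : (Fin (n+1) → Bool) → ℝ := fun ω => ∑ m : Fin (n+1), a m * eps ω m with hS
  have key : ∀ ω, t ≤ |S ω| →
      (1:ℝ) ≤ Real.exp (l * S ω) * Real.exp (-(l*t)) + Real.exp (l * (-S ω)) * Real.exp (-(l*t)) := by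
    intro ω hω
    rcases abs_cases (S ω) with ⟨he, _⟩ | ⟨he, _⟩
    · have h1 : (1:ℝ) ≤ Real.exp (l * S ω) * Real.exp (-(l*t)) := by
        rw [← Real.exp_add]
        have : 0 ≤ l * S ω + -(l * t) := by nlinarith [he ▸ hω]
        calc (1:ℝ) = Real.exp 0 := by rw [Real.exp_zero]
          _ ≤ _ := Real.exp_le_exp.2 this
      have h2 : 0 ≤ Real.exp (l * (-S ω)) * Real.exp (-(l*t)) := by positivity
      linarith
    · have h1 : (1:ℝ) ≤ Real.exp (l * (-S ω)) * Real.exp (-(l*t)) := by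
        rw [← Real.exp_add]
        have : 0 ≤ l * (-S ω) + -(l * t) := by nlinarith [he ▸ hω]
        calc (1:ℝ) = Real.exp 0 := by rw [Real.exp_zero]
          _ ≤ _ := Real.exp_le_exp.2 this
      have h2 : 0 ≤ Real.exp (l * S ω) * Real.exp (-(l*t)) := by positivity
      linarith
  have hsum1 : ∑ ω : Fin (n+1) → Bool, Real.exp (l * S ω)
      ≤ 2^(n+1) * Real.exp (l^2 * V / 2) := by
    have he : ∀ ω, l * S ω = ∑ m : Fin (n+1), (l * a m) * eps ω m := by
      intro ω; rw [hS, Finset.mul_sum]; exact Finset.sum_congr rfl fun m _ => by ring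
    simp_rw [he]
    calc ∑ ω : Fin (n+1) → Bool, Real.exp (∑ m : Fin (n+1), (l * a m) * eps ω m)
        ≤ 2^(n+1) * Real.exp ((∑ m : Fin (n+1), (l * a m)^2) / 2) := sum_exp_le n _
      _ ≤ 2^(n+1) * Real.exp (l^2 * V / 2) := by
          gcongr
          have : ∑ m : Fin (n+1), (l * a m)^2 = l^2 * ∑ m : Fin (n+1), (a m)^2 := by
            rw [Finset.mul_sum]; exact Finset.sum_congr rfl fun m _ => by ring
          rw [this]
          nlinarith [sq_nonneg l]
  have hsum2 : ∑ ω : Fin (n+1) → Bool, Real.exp (l * (-S ω))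
      ≤ 2^(n+1) * Real.exp (l^2 * V / 2) := by
    have he : ∀ ω, l * (-S ω) = ∑ m : Fin (n+1), (-(l * a m)) * eps ω m := by
      intro ω
      show l * -(∑ m : Fin (n+1), a m * eps ω m) = _
      rw [mul_neg, Finset.mul_sum, ← Finset.sum_neg_distrib]
      exact Finset.sum_congr rfl fun m _ => by ring
    simp_rw [he]
    calc ∑ ω : Fin (n+1) → Bool, Real.exp (∑ m : Fin (n+1), (-(l * a m)) * eps ω m)
        ≤ 2^(n+1) * Real.exp ((∑ m : Fin (n+1), (-(l * a m))^2) / 2) := sum_exp_le n _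
      _ ≤ 2^(n+1) * Real.exp (l^2 * V / 2) := by
          gcongr
          have : ∑ m : Fin (n+1), (-(l * a m))^2 = l^2 * ∑ m : Fin (n+1), (a m)^2 := by
            rw [Finset.mul_sum]; exact Finset.sum_congr rfl fun m _ => by ring
          rw [this]
          nlinarith [sq_nonneg l]
  have hmain : (((univ : Finset (Fin (n+1) → Bool)).filter fun ω => t ≤ |S ω|).card : ℝ)
      ≤ 2^(n+1) * (2 * Real.exp (l^2 * V / 2 - l * t)) := by
    calc (((univ : Finset (Fin (n+1) → Bool)).filter fun ω => t ≤ |S ω|).card : ℝ)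
        = ∑ ω ∈ (univ : Finset (Fin (n+1) → Bool)).filter fun ω => t ≤ |S ω|, (1:ℝ) := by
          rw [Finset.sum_const]; simp
      _ ≤ ∑ ω ∈ (univ : Finset (Fin (n+1) → Bool)).filter fun ω => t ≤ |S ω|,
            (Real.exp (l * S ω) * Real.exp (-(l*t)) + Real.exp (l * (-S ω)) * Real.exp (-(l*t))) := by
          refine Finset.sum_le_sum fun ω hω => key ω ?_
          exact (Finset.mem_filter.mp hω).2
      _ ≤ ∑ ω : Fin (n+1) → Bool,
            (Real.exp (l * S ω) * Real.exp (-(l*t)) + Real.exp (l * (-S ω)) * Real.exp (-(l*t))) := by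
          refine Finset.sum_le_sum_of_subset_of_nonneg (Finset.filter_subset _ _)
            fun ω _ _ => by positivity
      _ = (∑ ω : Fin (n+1) → Bool, Real.exp (l * S ω)) * Real.exp (-(l*t))
          + (∑ ω : Fin (n+1) → Bool, Real.exp (l * (-S ω))) * Real.exp (-(l*t)) := by
          rw [Finset.sum_add_distrib, Finset.sum_mul, Finset.sum_mul]
      _ ≤ 2^(n+1) * Real.exp (l^2 * V / 2) * Real.exp (-(l*t))
          + 2^(n+1) * Real.exp (l^2 * V / 2) * Real.exp (-(l*t)) := by
          gcongr <;> positivity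
      _ = 2^(n+1) * (2 * Real.exp (l^2 * V / 2 - l * t)) := by
          rw [show l^2 * V / 2 - l * t = l^2 * V / 2 + -(l * t) from by ring, Real.exp_add]
          ring
  have hexp : l^2 * V / 2 - l * t = -(t^2) / (2*V) := by
    rw [hl]; field_simp; ring
  rw [hexp] at hmain
  exact hmain

open scoped Classical in
lemma signs_apply_le {n : ℕ} (s : Set (Fin (n+1) → Bool)) (g : ℝ)
    (h : (((univ : Finset (Fin (n+1) → Bool)).filter fun ω => ω ∈ s).card : ℝ) ≤ 2^(n+1) * g) :
    signs n s ≤ ENNReal.ofReal g := by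
  have hcardN : Fintype.card (Fin (n+1) → Bool) = 2^(n+1) := by
    simp [Fintype.card_fun]
  have h2 : ((Fintype.card (Fin (n+1) → Bool) : ℝ≥0∞))⁻¹
      = ENNReal.ofReal (((2:ℝ)^(n+1))⁻¹) := by
    rw [hcardN, ENNReal.ofReal_inv_of_pos (by positivity),
      ENNReal.ofReal_pow (by norm_num), ENNReal.ofReal_ofNat]
    push_cast
    rfl
  have key : ∀ x : Fin (n+1) → Bool,
      Set.indicator s (⇑(PMF.uniformOfFintype (Fin (n+1) → Bool))) x
        = ENNReal.ofReal (if x ∈ s then ((2:ℝ)^(n+1))⁻¹ else 0) := by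
    intro x
    rw [Set.indicator_apply]
    split
    · rw [PMF.uniformOfFintype_apply, h2]
    · simp
  calc signs n s = ∑ x : Fin (n+1) → Bool,
        Set.indicator s (⇑(PMF.uniformOfFintype (Fin (n+1) → Bool))) x := by
        rw [signs, PMF.toMeasure_apply_fintype]
    _ = ∑ x : Fin (n+1) → Bool,
        ENNReal.ofReal (if x ∈ s then ((2:ℝ)^(n+1))⁻¹ else 0) :=
        Finset.sum_congr rfl fun x _ => key x
    _ = ENNReal.ofReal (∑ x : Fin (n+1) → Bool,
        if x ∈ s then ((2:ℝ)^(n+1))⁻¹ else 0) :=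
        (ENNReal.ofReal_sum_of_nonneg fun x _ => by positivity).symm
    _ ≤ ENNReal.ofReal g := by
        refine ENNReal.ofReal_le_ofReal ?_
        rw [← Finset.sum_filter, Finset.sum_const, nsmul_eq_mul]
        calc (((univ : Finset (Fin (n+1) → Bool)).filter fun ω => ω ∈ s).card : ℝ)
              * ((2:ℝ)^(n+1))⁻¹
            ≤ (2^(n+1) * g) * ((2:ℝ)^(n+1))⁻¹ := by gcongr
          _ = g := by field_simp
        

open scoped Classical in
lemma chernoff {n : ℕ} (a : Fin (n+1) → ℝ) (t V : ℝ) (ht : 0 < t) (hV : 0 < V)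
    (hA : ∑ m : Fin (n+1), (a m)^2 ≤ V) :
    signs n {ω | t ≤ |∑ m : Fin (n+1), a m * eps ω m|}
      ≤ ENNReal.ofReal (2 * Real.exp (-(t^2) / (2*V))) := by
  refine signs_apply_le _ _ ?_
  have h := card_filter_le n a t V ht hV hA
  calc (((univ : Finset (Fin (n+1) → Bool)).filter
        fun ω => ω ∈ {ω | t ≤ |∑ m : Fin (n+1), a m * eps ω m|}).card : ℝ)
      = (((univ : Finset (Fin (n+1) → Bool)).filter
        fun ω => t ≤ |∑ m : Fin (n+1), a m * eps ω m|).card : ℝ) := by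
        norm_num [Set.mem_setOf_eq]
    _ ≤ _ := h

lemma abs_cos_sub_cos' (a b : ℝ) : |Real.cos a - Real.cos b| ≤ |a - b| := by
  rw [Real.cos_sub_cos, abs_mul, abs_mul]
  have e2 : |(-2 : ℝ)| = 2 := by norm_num
  have es1 : |Real.sin ((a+b)/2)| ≤ 1 := abs_le.mpr ⟨Real.neg_one_le_sin _, Real.sin_le_one _⟩
  have es2 : |Real.sin ((a-b)/2)| ≤ |(a-b)/2| := Real.abs_sin_le_abs
  have h0 : (0:ℝ) ≤ |Real.sin ((a-b)/2)| := abs_nonneg _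
  have h1 : (0:ℝ) ≤ |Real.sin ((a+b)/2)| := abs_nonneg _
  rw [e2, abs_div, abs_two] at *
  nlinarith [abs_nonneg (a-b)]

lemma P_lipschitz (n : ℕ) (ω : Fin (n+1) → Bool) (x y : ℝ) :
    |P n ω x - P n ω y| ≤ (n:ℝ) * 2^n * |x - y| := by
  have h1 : P n ω x - P n ω y
      = ∑ m : Fin (n+1), (n.choose m : ℝ) * eps ω m * (Real.cos (m*x) - Real.cos (m*y)) := by
    rw [P, P, ← Finset.sum_sub_distrib]
    exact Finset.sum_congr rfl fun m _ => by ring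
  rw [h1]
  calc |∑ m : Fin (n+1), (n.choose m : ℝ) * eps ω m * (Real.cos (m*x) - Real.cos (m*y))|
      ≤ ∑ m : Fin (n+1), |(n.choose m : ℝ) * eps ω m * (Real.cos (m*x) - Real.cos (m*y))| :=
        Finset.abs_sum_le_sum_abs _ _
    _ ≤ ∑ m : Fin (n+1), (n.choose m : ℝ) * ((n:ℝ) * |x - y|) := by
        refine Finset.sum_le_sum fun m _ => ?_
        rw [abs_mul, abs_mul, abs_eps, mul_one, Nat.abs_cast]
        have hcc : |Real.cos (m*x) - Real.cos (m*y)| ≤ (m:ℝ) * |x - y| := by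
          calc |Real.cos (m*x) - Real.cos (m*y)|
              ≤ |(m:ℝ)*x - (m:ℝ)*y| := abs_cos_sub_cos' _ _
            _ = (m:ℝ) * |x - y| := by
                rw [← mul_sub, abs_mul]
                norm_num
        calc (n.choose m : ℝ) * |Real.cos (m*x) - Real.cos (m*y)|
            ≤ (n.choose m : ℝ) * ((m:ℝ) * |x-y|) := by gcongr;
          _ ≤ (n.choose m : ℝ) * ((n:ℝ) * |x-y|) := by
              gcongr
              exact_mod_cast Fin.is_le m
    _ = (∑ m : Fin (n+1), (n.choose m : ℝ)) * ((n:ℝ) * |x - y|) := by rw [Finset.sum_mul]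
    _ = (n:ℝ) * 2^n * |x - y| := by
        rw [Fin.sum_univ_eq_sum_range (fun m => (n.choose m : ℝ)), ← Nat.cast_sum,
          Nat.sum_range_choose]
        push_cast
        ring

lemma grid_approx (N : ℕ) (hN : 0 < N) (x : ℝ) (hx0 : 0 ≤ x) (hx2 : x ≤ 2*π) :
    ∃ j : ℕ, j < N ∧ |x - 2*π*j/N| ≤ 2*π/N := by
  have hπ := Real.pi_pos
  have hN' : (0:ℝ) < N := by exact_mod_cast hN
  set j0 := ⌊x * N / (2*π)⌋₊ with hj0
  by_cases hcase : j0 ≤ N - 1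
  · refine ⟨j0, lt_of_le_of_lt hcase (Nat.sub_lt hN one_pos), ?_⟩
    have hlow : (j0:ℝ) ≤ x * N / (2*π) := Nat.floor_le (by positivity)
    have hupp : x * N / (2*π) < (j0:ℝ) + 1 := Nat.lt_floor_add_one _
    have hlow' : (j0:ℝ) * (2*π) ≤ x * N := (le_div_iff₀ (by positivity)).mp hlow
    have hupp' : x * N < ((j0:ℝ) + 1) * (2*π) := (div_lt_iff₀ (by positivity)).mp hupp
    have e1 : 2*π*(j0:ℝ)/N ≤ x := by
      rw [div_le_iff₀ hN']
      nlinarith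
    have e2 : x ≤ (2*π*(j0:ℝ) + 2*π)/N := by
      rw [le_div_iff₀ hN']
      nlinarith
    rw [add_div] at e2
    rw [abs_le]
    constructor <;> [linarith; linarith]
  · refine ⟨N - 1, Nat.sub_lt hN one_pos, ?_⟩
    have hge : (N:ℝ) ≤ x * N / (2*π) := by
      have : N ≤ j0 := by omega
      exact_mod_cast le_trans (Nat.cast_le.mpr this) (Nat.floor_le (by positivity))
    have hx2' : 2*π ≤ x := by
      rw [le_div_iff₀ (by positivity)] at hge
      nlinarith
    have hxeq : x = 2*π := le_antisymm hx2 hx2'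
    have hcast : ((N-1:ℕ):ℝ) = (N:ℝ) - 1 := by
      rw [Nat.cast_sub hN]
      simp
    rw [hxeq, hcast]
    have : 2*π - 2*π*((N:ℝ) - 1)/N = 2*π/N := by
      field_simp
      ring
    rw [this]
    rw [abs_of_nonneg (by positivity)]

lemma M_le_of_grid {n : ℕ} (ω : Fin (n+1) → Bool) (N : ℕ) (hN : 0 < N) (c : ℝ)
    (h : ∀ j : ℕ, j < N → |P n ω (2*π*j/N)| ≤ c) :
    M n ω ≤ c + 2*π/N * ((n:ℝ) * 2^n) := by
  have hπ := Real.pi_pos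
  have hN' : (0:ℝ) < N := by exact_mod_cast hN
  haveI : Nonempty (Set.Icc (0:ℝ) (2*π)) :=
    Set.Nonempty.to_subtype (Set.nonempty_Icc.2 (by positivity))
  refine ciSup_le fun z => ?_
  obtain ⟨x, hx0, hx2⟩ := z
  obtain ⟨j, hjN, hdist⟩ := grid_approx N hN x hx0 hx2
  have h1 : |P n ω x| - |P n ω (2*π*j/N)| ≤ |P n ω x - P n ω (2*π*j/N)| :=
    abs_sub_abs_le_abs_sub _ _
  have h2 : |P n ω x - P n ω (2*π*j/N)| ≤ (n:ℝ) * 2^n * |x - 2*π*j/N| := P_lipschitz n ω _ _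
  have h3 : (n:ℝ) * 2^n * |x - 2*π*j/N| ≤ (n:ℝ) * 2^n * (2*π/N) := by
    gcongr
  have h4 := h j hjN
  have h5 : (n:ℝ) * 2^n * (2*π/N) = 2*π/N * ((n:ℝ) * 2^n) := by ring
  linarith


set_option maxHeartbeats 2000000 in
lemma main_bound (n : ℕ) (hn4 : 4 ≤ n) (hlog : 400 * π^2 ≤ Real.log n) :
    signs n {ω | M n ω ≤ 2 * Real.sqrt (R n * Real.log n)}ᶜ
      ≤ ENNReal.ofReal (2 * (n:ℝ) ^ (-(3:ℝ)/25)) := by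
  have hπ := Real.pi_pos
  have hn0 : 0 < n := by omega
  have hn0' : (0:ℝ) < n := by exact_mod_cast hn0
  have hlogpos : 0 < Real.log n := lt_of_lt_of_le (by positivity) hlog
  have hR := R_pos n
  set N := n * Nat.sqrt n with hN
  have hs1 : 1 ≤ Nat.sqrt n := by
    have h9 : Nat.sqrt 4 ≤ Nat.sqrt n := Nat.sqrt_le_sqrt hn4
    exact Nat.succ_le_of_lt (lt_of_lt_of_le (by norm_num) h9)
  have hNpos : 0 < N := Nat.mul_pos hn0 hs1
  have hNr : (N:ℝ) = (n:ℝ) * (Nat.sqrt n : ℝ) := by rw [hN]; push_cast; ring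
  have hNr' : (0:ℝ) < N := by exact_mod_cast hNpos
  -- sqrt comparisons
  have hns1 : (Nat.sqrt n : ℝ) ≤ Real.sqrt n := by
    rw [show ((Nat.sqrt n : ℝ)) = Real.sqrt ((Nat.sqrt n : ℝ)^2) from
      (Real.sqrt_sq (by positivity)).symm]
    apply Real.sqrt_le_sqrt
    have hq : (Nat.sqrt n)^2 ≤ n := by
      have := Nat.sqrt_le' n
      nlinarith
    exact_mod_cast hq
  have hns2 : Real.sqrt n ≤ 2 * (Nat.sqrt n : ℝ) := by
    rw [show (2 * (Nat.sqrt n : ℝ)) = Real.sqrt ((2 * (Nat.sqrt n : ℝ))^2) from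
      (Real.sqrt_sq (by positivity)).symm]
    apply Real.sqrt_le_sqrt
    have h1 : n < (Nat.sqrt n + 1) * (Nat.sqrt n + 1) := Nat.lt_succ_sqrt n
    have h2 : (Nat.sqrt n + 1) * (Nat.sqrt n + 1) ≤ 4 * (Nat.sqrt n * Nat.sqrt n) := by nlinarith
    have : (n:ℝ) < 4 * ((Nat.sqrt n:ℝ) * (Nat.sqrt n:ℝ)) := by exact_mod_cast lt_of_lt_of_le h1 h2
    nlinarith
  have h2n : (2:ℝ)^n ≤ Real.sqrt ((n:ℝ) * R n) := by
    rw [show ((2:ℝ)^n) = Real.sqrt (((2:ℝ)^n)^2) from (Real.sqrt_sq (by positivity)).symm]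
    apply Real.sqrt_le_sqrt
    have h4 : (4:ℕ)^n < n * Nat.centralBinom n := Nat.four_pow_lt_mul_centralBinom n hn4
    have h4' : ((4:ℝ))^n ≤ (n:ℝ) * (Nat.centralBinom n : ℝ) := by
      exact_mod_cast le_of_lt h4
    rw [R_eq]
    calc ((2:ℝ)^n)^2 = (4:ℝ)^n := by
          rw [← pow_mul, mul_comm, pow_mul]
          norm_num
      _ ≤ (n:ℝ) * (Nat.centralBinom n : ℝ) := h4'

  set t := (9/5) * Real.sqrt (R n * Real.log n) with ht
  have htpos : 0 < t := by
    have : 0 < Real.sqrt (R n * Real.log n) := Real.sqrt_pos.2 (by positivity)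
    rw [ht]; linarith
  -- correction bound
  have hcorr : 2*π/N * ((n:ℝ)*2^n) ≤ (1/5) * Real.sqrt (R n * Real.log n) := by
    have hA : 2*π/N * ((n:ℝ)*2^n) ≤ 4*π*Real.sqrt (R n) := by
      rw [div_mul_eq_mul_div, div_le_iff₀ hNr']
      have e1 : (2:ℝ)^n ≤ Real.sqrt n * Real.sqrt (R n) := by
        rw [← Real.sqrt_mul (le_of_lt hn0')]
        exact h2n
      have e5 : (2:ℝ)^n ≤ 2*(Nat.sqrt n:ℝ)*Real.sqrt (R n) := by
        nlinarith [Real.sqrt_nonneg (R n), Real.sqrt_nonneg (n:ℝ)]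
      calc 2*π*((n:ℝ)*2^n) ≤ 2*π*((n:ℝ)*(2*(Nat.sqrt n:ℝ)*Real.sqrt (R n))) := by gcongr
        _ = 4*π*Real.sqrt (R n) * ((n:ℝ) * (Nat.sqrt n:ℝ)) := by ring
        _ = 4*π*Real.sqrt (R n) * (N:ℝ) := by rw [hNr]
    have hB : 4*π*Real.sqrt (R n) ≤ (1/5) * Real.sqrt (R n * Real.log n) := by
      rw [Real.sqrt_mul hR.le]
      have h20 : 20*π ≤ Real.sqrt (Real.log n) := by
        rw [show (20*π) = Real.sqrt ((20*π)^2) from (Real.sqrt_sq (by positivity)).symm]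
        apply Real.sqrt_le_sqrt
        nlinarith
      nlinarith [Real.sqrt_nonneg (R n), Real.sqrt_nonneg (Real.log n)]
    linarith
  -- inclusion into a union over grid points
  have hsub : {ω : Fin (n+1) → Bool | M n ω ≤ 2 * Real.sqrt (R n * Real.log n)}ᶜ
      ⊆ ⋃ j ∈ Finset.range N, {ω : Fin (n+1) → Bool | t ≤ |P n ω (2*π*j/N)|} := by
    intro ω hω
    by_contra hc
    simp only [Set.mem_iUnion, Set.mem_setOf_eq, not_exists] at hc
    push_neg at hc
    apply hω
    simp only [Set.mem_setOf_eq]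
    have hall : ∀ j : ℕ, j < N → |P n ω (2*π*j/N)| ≤ t := by
      intro j hj
      exact le_of_lt (hc j (Finset.mem_range.mpr hj))
    calc M n ω ≤ t + 2*π/N * ((n:ℝ)*2^n) := M_le_of_grid ω N hNpos t hall
      _ ≤ (9/5) * Real.sqrt (R n * Real.log n) + (1/5) * Real.sqrt (R n * Real.log n) := by
          rw [ht]; linarith
      _ = 2 * Real.sqrt (R n * Real.log n) := by ring
  -- Chernoff for each grid point
  have hcher : ∀ j ∈ Finset.range N, signs n {ω : Fin (n+1) → Bool | t ≤ |P n ω (2*π*j/N)|}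
      ≤ ENNReal.ofReal (2 * Real.exp (-(t^2)/(2 * R n))) := by
    intro j _
    have hset : {ω : Fin (n+1) → Bool | t ≤ |P n ω (2*π*j/N)|}
        = {ω : Fin (n+1) → Bool |
            t ≤ |∑ m : Fin (n+1), ((n.choose m : ℝ) * Real.cos (m * (2*π*j/N))) * eps ω m|} := by
      ext ω
      simp only [Set.mem_setOf_eq, P]
      rw [show (∑ m : Fin (n+1), (n.choose m:ℝ) * eps ω m * Real.cos (m * (2*π*j/N)))
          = ∑ m : Fin (n+1), ((n.choose m:ℝ) * Real.cos (m * (2*π*j/N))) * eps ω m from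
        Finset.sum_congr rfl fun m _ => by ring]
    rw [hset]
    refine chernoff _ t (R n) htpos hR ?_
    calc ∑ m : Fin (n+1), ((n.choose m:ℝ) * Real.cos (m * (2*π*j/N)))^2
        ≤ ∑ m : Fin (n+1), (n.choose (m:ℕ) : ℝ)^2 := by
          refine Finset.sum_le_sum fun m _ => ?_
          have hc1 : Real.cos ((m:ℝ) * (2*π*j/N))^2 ≤ 1 := Real.cos_sq_le_one _
          nlinarith [sq_nonneg ((n.choose (m:ℕ) : ℝ)), sq_nonneg (Real.cos ((m:ℝ) * (2*π*j/N)))]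
      _ = R n := by
          rw [R, ← Fin.sum_univ_eq_sum_range (fun m => ((n.choose m : ℝ))^2) (n+1)]
  -- simplify the exponential
  have hexp : -(t^2)/(2 * R n) = -(81:ℝ)/50 * Real.log n := by
    rw [ht, mul_pow, Real.sq_sqrt (by positivity)]
    field_simp
    ring
  have hrw : Real.exp (-(81:ℝ)/50 * Real.log n) = (n:ℝ) ^ (-(81:ℝ)/50) := by
    rw [Real.rpow_def_of_pos hn0', mul_comm]
  have hNle : (N:ℝ) ≤ (n:ℝ) ^ ((3:ℝ)/2) := by
    rw [hNr]
    calc (n:ℝ) * (Nat.sqrt n:ℝ) ≤ (n:ℝ) * Real.sqrt n := by gcongr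
      _ = (n:ℝ)^(1:ℝ) * (n:ℝ)^((1:ℝ)/2) := by rw [Real.rpow_one, Real.sqrt_eq_rpow]
      _ = (n:ℝ)^((3:ℝ)/2) := by rw [← Real.rpow_add hn0']; norm_num
  have hfinal : (N:ℝ) * (2 * Real.exp (-(t^2)/(2 * R n))) ≤ 2 * (n:ℝ)^(-(3:ℝ)/25) := by
    rw [hexp, hrw]
    have hcomb : (n:ℝ)^((3:ℝ)/2) * (n:ℝ)^(-(81:ℝ)/50) = (n:ℝ)^(-(3:ℝ)/25) := by
      rw [← Real.rpow_add hn0']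
      norm_num
    calc (N:ℝ) * (2 * (n:ℝ)^(-(81:ℝ)/50))
        ≤ (n:ℝ)^((3:ℝ)/2) * (2 * (n:ℝ)^(-(81:ℝ)/50)) := by
          have : (0:ℝ) ≤ (n:ℝ)^(-(81:ℝ)/50) := Real.rpow_nonneg (le_of_lt hn0') _
          nlinarith
      _ = 2 * ((n:ℝ)^((3:ℝ)/2) * (n:ℝ)^(-(81:ℝ)/50)) := by ring
      _ = 2 * (n:ℝ)^(-(3:ℝ)/25) := by rw [hcomb]
  calc signs n {ω | M n ω ≤ 2 * Real.sqrt (R n * Real.log n)}ᶜ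
      ≤ signs n (⋃ j ∈ Finset.range N, {ω : Fin (n+1) → Bool | t ≤ |P n ω (2*π*j/N)|}) :=
        measure_mono hsub
    _ ≤ ∑ j ∈ Finset.range N, signs n {ω : Fin (n+1) → Bool | t ≤ |P n ω (2*π*j/N)|} :=
        measure_biUnion_finset_le _ _
    _ ≤ ∑ _j ∈ Finset.range N, ENNReal.ofReal (2 * Real.exp (-(t^2)/(2 * R n))) :=
        Finset.sum_le_sum hcher
    _ = (N : ℝ≥0∞) * ENNReal.ofReal (2 * Real.exp (-(t^2)/(2 * R n))) := by
        rw [Finset.sum_const, Finset.card_range, nsmul_eq_mul]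
    _ = ENNReal.ofReal ((N:ℝ) * (2 * Real.exp (-(t^2)/(2 * R n)))) := by
        rw [ENNReal.ofReal_mul (show (0:ℝ) ≤ (N:ℝ) from Nat.cast_nonneg N),
          ENNReal.ofReal_natCast]
    _ ≤ ENNReal.ofReal (2 * (n:ℝ)^(-(3:ℝ)/25)) := ENNReal.ofReal_le_ofReal hfinal

set_option maxHeartbeats 2000000 in
theorem stmt1 :
    Tendsto
      (fun n : ℕ =>
        signs n {ω | M n ω ≤ 2 * Real.sqrt (R n * Real.log n)})
      atTop (nhds 1) := by
  have key : Tendsto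
      (fun n : ℕ => signs n {ω | M n ω ≤ 2 * Real.sqrt (R n * Real.log n)}ᶜ)
      atTop (nhds 0) := by
    have h0 : Tendsto (fun n : ℕ => ENNReal.ofReal (2 * (n:ℝ) ^ (-(3:ℝ)/25))) atTop (nhds 0) := by
      have hr : Tendsto (fun n : ℕ => 2 * (n:ℝ) ^ (-(3:ℝ)/25)) atTop (nhds 0) := by
        have h1 := (tendsto_rpow_neg_atTop (y := (3:ℝ)/25) (by norm_num)).comp
          (tendsto_natCast_atTop_atTop (R := ℝ))
        have h2 := h1.const_mul (2:ℝ)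
        simp only [Function.comp_def, mul_zero] at h2
        convert h2 using 2
        norm_num
      have h3 := ENNReal.tendsto_ofReal hr
      simpa using h3
    refine tendsto_of_tendsto_of_tendsto_of_le_of_le' tendsto_const_nhds h0
      (Eventually.of_forall fun n => zero_le) ?_
    have hev1 : ∀ᶠ n : ℕ in atTop, 4 ≤ n := eventually_ge_atTop 4
    have hev2 : ∀ᶠ n : ℕ in atTop, 400 * π^2 ≤ Real.log n := by
      have h4 := Real.tendsto_log_atTop.comp (tendsto_natCast_atTop_atTop (R := ℝ))
      exact h4.eventually_ge_atTop _
    filter_upwards [hev1, hev2] with n hn4 hlog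
    exact main_bound n hn4 hlog
  have hfin : ∀ n : ℕ, signs n {ω | M n ω ≤ 2 * Real.sqrt (R n * Real.log n)}
      = 1 - signs n {ω | M n ω ≤ 2 * Real.sqrt (R n * Real.log n)}ᶜ := by
    intro n
    haveI : IsProbabilityMeasure (signs n) := PMF.toMeasure.isProbabilityMeasure _
    rw [prob_compl_eq_one_sub (meas_all _)]
    exact (ENNReal.sub_sub_cancel ENNReal.one_ne_top prob_le_one).symm
  have h := ENNReal.Tendsto.sub
    (tendsto_const_nhds : Tendsto (fun _ : ℕ => (1:ℝ≥0∞)) atTop (nhds 1)) key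
    (Or.inl ENNReal.one_ne_top)
  refine Tendsto.congr (fun n => (hfin n).symm) ?_
  simpa using h
end

section
/- Let ε_1, …, ε_{n+1} be independent random signs, each equal to +1 or −1 with probability 1/2, let c_0, …, c_n be real constants, let f = Σ_{m=0}^n c_m ε_{m+1}, let C = Σ_{m=0}^n c_m², and let D = Σ_{m=0}^n c_m⁴. Then for any real number λ, the expectation E[e^{λ f}] satisfies E[e^{λ f}] ≥ e^{(1/2)λ²C − λ⁴D}. -/
open MeasureTheory Finset Real

lemma key_cosh (x : ℝ) : Real.exp (x^2/2 - x^4) ≤ Real.cosh x := by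
  have hsinh : (x/2)^2 ≤ Real.sinh (x/2)^2 := by
    rcases le_total 0 (x/2) with h | h
    · have := Real.self_le_sinh_iff.2 h
      nlinarith
    · have h2 : Real.sinh (x/2) ≤ x/2 := by
        have := Real.self_le_sinh_iff (x := -(x/2)) |>.2 (by linarith)
        rw [Real.sinh_neg] at this; linarith
      nlinarith
  have hcosh : 1 + x^2/2 ≤ Real.cosh x := by
    have h2 : Real.cosh x = Real.cosh (x/2)^2 + Real.sinh (x/2)^2 := by
      rw [← Real.cosh_two_mul]; ring_nf
    have h3 := Real.cosh_sq (x/2)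
    nlinarith
  set t : ℝ := x^2/2 - x^4 with ht
  have htle : t ≤ 1/16 := by nlinarith [sq_nonneg (4*x^2 - 1)]
  have h1t : (0:ℝ) < 1 - t := by rw [ht]; nlinarith [sq_nonneg (4*x^2 - 1)]
  have hexp : Real.exp t * (1 - t) ≤ 1 := by
    have h4 : 1 - t ≤ Real.exp (-t) := by
      have := Real.add_one_le_exp (-t); linarith
    calc Real.exp t * (1 - t) ≤ Real.exp t * Real.exp (-t) := by
          exact mul_le_mul_of_nonneg_left h4 (Real.exp_pos t).le
      _ = 1 := by rw [← Real.exp_add]; simp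
  have h5 : Real.exp t ≤ 1 / (1 - t) := by
    rw [le_div_iff₀ h1t]; exact hexp
  have h6 : 1 / (1 - t) ≤ 1 + x^2/2 := by
    rw [div_le_iff₀ h1t]
    nlinarith [sq_nonneg x, sq_nonneg (x^2), sq_nonneg (x^3)]
  linarith

theorem stmt6 (n : ℕ) (c : ℕ → ℝ) (l : ℝ) :
    (∫ ω, Real.exp (l * ∑ m : Fin (n+1), c m * eps ω m) ∂(signs n))
      ≥ Real.exp (1/2 * l^2 * (∑ m ∈ range (n+1), (c m)^2) - l^4 * ∑ m ∈ range (n+1), (c m)^4) := by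
  classical
  have hint : (∫ ω, Real.exp (l * ∑ m : Fin (n+1), c m * eps ω m) ∂(signs n))
      = ∏ m : Fin (n+1), Real.cosh (l * c m) := by
    rw [signs, PMF.integral_eq_sum]
    have hcard : (Fintype.card (Fin (n+1) → Bool) : ℝ) = 2^(n+1) := by
      simp [Fintype.card_fun]
    calc ∑ ω : Fin (n+1) → Bool,
          ((PMF.uniformOfFintype (Fin (n+1) → Bool)) ω).toReal •
            Real.exp (l * ∑ m : Fin (n+1), c m * eps ω m)
        = ∑ ω : Fin (n+1) → Bool, ∏ m : Fin (n+1),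
            ((2:ℝ)⁻¹ * Real.exp (l * (c m * eps ω m))) := by
          refine Finset.sum_congr rfl fun ω _ => ?_
          rw [PMF.uniformOfFintype_apply, Finset.prod_mul_distrib, Finset.prod_const,
            ← Real.exp_sum]
          simp only [smul_eq_mul]
          congr 1
          · rw [ENNReal.toReal_inv]
            simp [hcard]
          · congr 1
            rw [Finset.mul_sum]
      _ = ∏ m : Fin (n+1), ∑ b : Bool,
            ((2:ℝ)⁻¹ * Real.exp (l * (c m * (if b then 1 else -1)))) := by
          rw [Finset.prod_univ_sum]
          rw [← Fintype.piFinset_univ]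
          rfl
      _ = ∏ m : Fin (n+1), Real.cosh (l * c m) := by
          refine Finset.prod_congr rfl fun m _ => ?_
          rw [Real.cosh_eq, Fintype.sum_bool]
          norm_num
          ring_nf
  rw [hint, ge_iff_le]
  have hrhs : Real.exp (1/2 * l^2 * (∑ m ∈ range (n+1), (c m)^2)
        - l^4 * ∑ m ∈ range (n+1), (c m)^4)
      = ∏ m : Fin (n+1), Real.exp ((l * c m)^2/2 - (l * c m)^4) := by
    rw [← Real.exp_sum]
    congr 1
    rw [← Fin.sum_univ_eq_sum_range (fun m => (c m)^2), ← Fin.sum_univ_eq_sum_range (fun m => (c m)^4),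
      Finset.mul_sum, Finset.mul_sum, ← Finset.sum_sub_distrib]
    refine Finset.sum_congr rfl fun m _ => ?_
    ring
  rw [hrhs]
  exact Finset.prod_le_prod (fun m _ => (Real.exp_pos _).le)
    (fun m _ => key_cosh (l * c m))
end

section
/- Let g(x,y) be a bounded measurable real-valued function on [a,b] × [c,d] with a < b and c < d. Suppose |g(x,y)| ≤ A for all (x,y), where A > 0, and that (∫_c^d ∫_a^b g²(x,y) dx dy) / ((b−a)(d−c)) = B. Then for any positive real number μ, (∫_c^d ∫_a^b e^{μ g(x,y)} dx dy) / ((b−a)(d−c)) ≤ 1 + μ√B + (B/A²) e^{μA}. -/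
open MeasureTheory Real

lemma exp_taylor_bound {M s : ℝ} (hM : 0 < M) (hs : |s| ≤ M) :
    Real.exp s ≤ 1 + s + s ^ 2 / M ^ 2 * Real.exp M := by
  have hsum : ∀ t : ℝ, HasSum (fun n : ℕ => ((n.factorial : ℝ))⁻¹ * t ^ n) (Real.exp t) := by
    intro t
    have := NormedSpace.exp_series_hasSum_exp' (𝕂 := ℝ) t
    rw [Real.exp_eq_exp_ℝ]
    simpa [smul_eq_mul] using this
  have hshift : ∀ t : ℝ, HasSum (fun n : ℕ => (((n+2).factorial : ℝ))⁻¹ * t ^ (n + 2))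
      (Real.exp t - (1 + t)) := by
    intro t
    have h := (hasSum_nat_add_iff' (f := fun n : ℕ => ((n.factorial : ℝ))⁻¹ * t ^ n) 2).2 (hsum t)
    have : ∑ i ∈ Finset.range 2, ((i.factorial : ℝ))⁻¹ * t ^ i = 1 + t := by
      simp [Finset.sum_range_succ]
    rwa [this] at h
  have hS : HasSum (fun n : ℕ => s ^ 2 / M ^ 2 * ((((n+2).factorial : ℝ))⁻¹ * M ^ (n + 2)))
      (s ^ 2 / M ^ 2 * (Real.exp M - (1 + M))) := (hshift M).mul_left _
  have hle : Real.exp s - (1 + s) ≤ s ^ 2 / M ^ 2 * (Real.exp M - (1 + M)) := by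
    refine hasSum_le (fun n => ?_) (hshift s) hS
    have h1 : s ^ (n + 2) ≤ s ^ 2 * M ^ n := by
      calc s ^ (n + 2) ≤ |s ^ (n + 2)| := le_abs_self _
        _ = s ^ 2 * |s| ^ n := by rw [abs_pow]; rw [pow_add]; rw [sq_abs]; ring
        _ ≤ s ^ 2 * M ^ n := by
            gcongr
    have h2 : (0:ℝ) ≤ (((n+2).factorial : ℝ))⁻¹ := by positivity
    have hM2 : M ^ (n + 2) = M ^ n * M ^ 2 := by ring
    rw [hM2]
    have hMne : (M:ℝ) ^ 2 ≠ 0 := by positivity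
    have heq : s ^ 2 / M ^ 2 * ((((n+2).factorial : ℝ))⁻¹ * (M ^ n * M ^ 2))
        = (((n+2).factorial : ℝ))⁻¹ * (s ^ 2 * M ^ n) := by
      field_simp
    rw [heq]
    exact mul_le_mul_of_nonneg_left h1 h2
  have hfrac : (0:ℝ) ≤ s ^ 2 / M ^ 2 := by positivity
  nlinarith [hle, hfrac, hM]

lemma intervalIntegrable_of_bounded {f : ℝ → ℝ} {a b C : ℝ} (hab : a ≤ b)
    (hf : Measurable f) (hC : ∀ x ∈ Set.Icc a b, |f x| ≤ C) :
    IntervalIntegrable f volume a b := by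
  rw [intervalIntegrable_iff, Set.uIoc_of_le hab]
  refine Integrable.mono' (integrable_const C) hf.aestronglyMeasurable.restrict ?_
  refine (ae_restrict_iff' measurableSet_Ioc).2 (Filter.Eventually.of_forall fun x hx => ?_)
  simpa [Real.norm_eq_abs] using hC x ⟨le_of_lt hx.1, hx.2⟩

lemma outer_integrable {a b c d C : ℝ} (hab : a ≤ b) (hcd : c ≤ d)
    {f : ℝ → ℝ → ℝ} (hf : Measurable (Function.uncurry f))
    (hC : ∀ x ∈ Set.Icc a b, ∀ y ∈ Set.Icc c d, |f x y| ≤ C) :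
    IntervalIntegrable (fun y => ∫ x in a..b, f x y) volume c d := by
  rw [intervalIntegrable_iff, Set.uIoc_of_le hcd]
  have h1 : ∀ y, (∫ x in a..b, f x y) = ∫ x in Set.Ioc a b, f x y := fun y =>
    intervalIntegral.integral_of_le hab
  simp_rw [h1]
  have hprod : Integrable (Function.uncurry f)
      ((volume.restrict (Set.Ioc a b)).prod (volume.restrict (Set.Ioc c d))) := by
    refine Integrable.mono' (integrable_const C) hf.aestronglyMeasurable ?_
    rw [Measure.prod_restrict]
    refine (ae_restrict_iff' (measurableSet_Ioc.prod measurableSet_Ioc)).2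
      (Filter.Eventually.of_forall fun p hp => ?_)
    simpa [Real.norm_eq_abs, Function.uncurry] using
      hC p.1 (Set.Ioc_subset_Icc_self hp.1) p.2 (Set.Ioc_subset_Icc_self hp.2)
  have := hprod.integral_prod_right
  refine this.mono_measure ?_ |>.congr ?_
  · exact le_refl _
  · exact Filter.Eventually.of_forall fun y => rfl

theorem stmt7 (a b c d A B : ℝ) (hab : a < b) (hcd : c < d)
    (g : ℝ → ℝ → ℝ) (hmeas : Measurable (Function.uncurry g))
    (hA : 0 < A)
    (hbound : ∀ x ∈ Set.Icc a b, ∀ y ∈ Set.Icc c d, |g x y| ≤ A)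
    (hB : (∫ y in c..d, ∫ x in a..b, (g x y)^2) / ((b - a) * (d - c)) = B)
    (μ : ℝ) (hμ : 0 < μ) :
    (∫ y in c..d, ∫ x in a..b, Real.exp (μ * g x y)) / ((b - a) * (d - c))
      ≤ 1 + μ * Real.sqrt B + B / A^2 * Real.exp (μ * A) := by
  have hab' := hab.le
  have hcd' := hcd.le
  set I := (b - a) * (d - c) with hIdef
  have hIpos : 0 < I := mul_pos (sub_pos.2 hab) (sub_pos.2 hcd)
  have hmg : ∀ y, Measurable (fun x => g x y) :=
    fun y => hmeas.comp (measurable_id.prodMk measurable_const)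
  -- slice integrabilities
  have hint_g : ∀ y ∈ Set.Icc c d, IntervalIntegrable (fun x => g x y) volume a b :=
    fun y hy => intervalIntegrable_of_bounded hab' (hmg y) (fun x hx => hbound x hx y hy)
  have hg2bound : ∀ x ∈ Set.Icc a b, ∀ y ∈ Set.Icc c d, |(g x y) ^ 2| ≤ A ^ 2 := by
    intro x hx y hy
    rw [abs_pow]
    exact pow_le_pow_left₀ (abs_nonneg _) (hbound x hx y hy) 2
  have hint_g2 : ∀ y ∈ Set.Icc c d, IntervalIntegrable (fun x => (g x y) ^ 2) volume a b :=
    fun y hy => intervalIntegrable_of_bounded hab' ((hmg y).pow_const 2)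
      (fun x hx => hg2bound x hx y hy)
  have hexpbound : ∀ x ∈ Set.Icc a b, ∀ y ∈ Set.Icc c d,
      |Real.exp (μ * g x y)| ≤ Real.exp (μ * A) := by
    intro x hx y hy
    rw [abs_of_pos (Real.exp_pos _)]
    apply Real.exp_le_exp.2
    have := hbound x hx y hy
    nlinarith [le_abs_self (g x y)]
  have hint_exp : ∀ y ∈ Set.Icc c d,
      IntervalIntegrable (fun x => Real.exp (μ * g x y)) volume a b :=
    fun y hy => intervalIntegrable_of_bounded hab' ((measurable_const.mul (hmg y)).exp)
      (fun x hx => hexpbound x hx y hy)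
  -- pointwise exponential bound
  have hpt : ∀ y ∈ Set.Icc c d, ∀ x ∈ Set.Icc a b,
      Real.exp (μ * g x y) ≤ 1 + μ * g x y + (g x y) ^ 2 * (Real.exp (μ * A) / A ^ 2) := by
    intro y hy x hx
    have hb := hbound x hx y hy
    have hMpos : 0 < μ * A := mul_pos hμ hA
    have habs : |μ * g x y| ≤ μ * A := by
      rw [abs_mul, abs_of_pos hμ]; exact mul_le_mul_of_nonneg_left hb hμ.le
    have h := exp_taylor_bound hMpos habs
    have heq : (μ * g x y) ^ 2 / (μ * A) ^ 2 * Real.exp (μ * A)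
        = (g x y) ^ 2 * (Real.exp (μ * A) / A ^ 2) := by
      field_simp
    rw [heq] at h
    exact h
  -- inner integral inequality
  have hinner : ∀ y ∈ Set.Icc c d,
      (∫ x in a..b, Real.exp (μ * g x y)) ≤ (b - a) + μ * (∫ x in a..b, g x y)
        + (∫ x in a..b, (g x y) ^ 2) * (Real.exp (μ * A) / A ^ 2) := by
    intro y hy
    have hR : IntervalIntegrable
        (fun x => 1 + μ * g x y + (g x y) ^ 2 * (Real.exp (μ * A) / A ^ 2)) volume a b :=
      (intervalIntegrable_const.add ((hint_g y hy).const_mul μ)).add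
        ((hint_g2 y hy).mul_const _)
    have h1 := intervalIntegral.integral_mono_on hab' (hint_exp y hy) hR (hpt y hy)
    have h2 : (∫ x in a..b, (1 + μ * g x y + (g x y) ^ 2 * (Real.exp (μ * A) / A ^ 2)))
        = (b - a) + μ * (∫ x in a..b, g x y)
          + (∫ x in a..b, (g x y) ^ 2) * (Real.exp (μ * A) / A ^ 2) := by
      rw [intervalIntegral.integral_add (intervalIntegrable_const.add ((hint_g y hy).const_mul μ))
        ((hint_g2 y hy).mul_const _),
        intervalIntegral.integral_add intervalIntegrable_const ((hint_g y hy).const_mul μ),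
        intervalIntegral.integral_const, intervalIntegral.integral_const_mul,
        intervalIntegral.integral_mul_const]
      simp
    rw [h2] at h1
    exact h1
  -- outer integrabilities
  have hF1 : IntervalIntegrable (fun y => ∫ x in a..b, Real.exp (μ * g x y)) volume c d := by
    refine outer_integrable hab' hcd' ?_ hexpbound
    exact (measurable_const.mul hmeas).exp
  have hF2 : IntervalIntegrable (fun y => ∫ x in a..b, g x y) volume c d :=
    outer_integrable hab' hcd' hmeas hbound
  have hF3 : IntervalIntegrable (fun y => ∫ x in a..b, (g x y) ^ 2) volume c d := by
    refine outer_integrable hab' hcd' ?_ hg2bound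
    exact hmeas.pow_const 2
  -- abbreviations
  set J := ∫ y in c..d, ∫ x in a..b, g x y with hJdef
  set K := ∫ y in c..d, ∫ x in a..b, (g x y) ^ 2 with hKdef
  have hKB : K = B * I := by
    field_simp at hB
    linarith [hB]
  have hB0 : 0 ≤ B := by
    have hK0 : 0 ≤ K := by
      apply intervalIntegral.integral_nonneg hcd'
      intro y _
      exact intervalIntegral.integral_nonneg hab' (fun x _ => sq_nonneg _)
    have : 0 ≤ B * I := hKB ▸ hK0
    nlinarith
  -- outer inequality
  have houter : (∫ y in c..d, ∫ x in a..b, Real.exp (μ * g x y))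
      ≤ I + μ * J + K * (Real.exp (μ * A) / A ^ 2) := by
    have hR : IntervalIntegrable (fun y => (b - a) + μ * (∫ x in a..b, g x y)
        + (∫ x in a..b, (g x y) ^ 2) * (Real.exp (μ * A) / A ^ 2)) volume c d :=
      (intervalIntegrable_const.add (hF2.const_mul μ)).add (hF3.mul_const _)
    have h1 := intervalIntegral.integral_mono_on hcd' hF1 hR hinner
    have h2 : (∫ y in c..d, ((b - a) + μ * (∫ x in a..b, g x y)
        + (∫ x in a..b, (g x y) ^ 2) * (Real.exp (μ * A) / A ^ 2)))
        = (d - c) * (b - a) + μ * J + K * (Real.exp (μ * A) / A ^ 2) := by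
      rw [intervalIntegral.integral_add (intervalIntegrable_const.add (hF2.const_mul μ))
        (hF3.mul_const _),
        intervalIntegral.integral_add intervalIntegrable_const (hF2.const_mul μ),
        intervalIntegral.integral_const, intervalIntegral.integral_const_mul,
        intervalIntegral.integral_mul_const]
      simp [hJdef, hKdef]
    rw [h2] at h1
    have : (d - c) * (b - a) = I := by rw [hIdef]; ring
    linarith [h1, this.le, this.ge]
  -- J ≤ I * sqrt B
  have hJle : ∀ ε : ℝ, 0 < ε → J ≤ I * ε + K / (4 * ε) := by
    intro ε hε
    have hptε : ∀ y ∈ Set.Icc c d, (∫ x in a..b, g x y)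
        ≤ (b - a) * ε + (∫ x in a..b, (g x y) ^ 2) / (4 * ε) := by
      intro y hy
      have hR : IntervalIntegrable (fun x => ε + (g x y) ^ 2 / (4 * ε)) volume a b :=
        intervalIntegrable_const.add ((hint_g2 y hy).div_const _)
      have h1 := intervalIntegral.integral_mono_on hab' (hint_g y hy) hR
        (fun x _ => by
          have h4 : (0:ℝ) < 4 * ε := by linarith
          rw [← sub_nonneg, show ε + (g x y) ^ 2 / (4 * ε) - g x y
            = (g x y - 2 * ε) ^ 2 / (4 * ε) by field_simp; ring]
          positivity)
      have h2 : (∫ x in a..b, (ε + (g x y) ^ 2 / (4 * ε)))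
          = (b - a) * ε + (∫ x in a..b, (g x y) ^ 2) / (4 * ε) := by
        rw [intervalIntegral.integral_add intervalIntegrable_const
          ((hint_g2 y hy).div_const _), intervalIntegral.integral_const,
          intervalIntegral.integral_div]
        simp [smul_eq_mul]
      rw [h2] at h1
      exact h1
    have hR : IntervalIntegrable (fun y => (b - a) * ε
        + (∫ x in a..b, (g x y) ^ 2) / (4 * ε)) volume c d :=
      intervalIntegrable_const.add (hF3.div_const _)
    have h1 := intervalIntegral.integral_mono_on hcd' hF2 hR hptε
    have h2 : (∫ y in c..d, ((b - a) * ε + (∫ x in a..b, (g x y) ^ 2) / (4 * ε)))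
        = (d - c) * ((b - a) * ε) + K / (4 * ε) := by
      rw [intervalIntegral.integral_add intervalIntegrable_const (hF3.div_const _),
        intervalIntegral.integral_const, intervalIntegral.integral_div]
      simp [hKdef, smul_eq_mul]
    rw [h2] at h1
    have : (d - c) * ((b - a) * ε) = I * ε := by rw [hIdef]; ring
    linarith
  have hJsqrt : J ≤ I * Real.sqrt B := by
    rcases eq_or_lt_of_le hB0 with hB0' | hBpos
    · -- B = 0
      rw [← hB0', Real.sqrt_zero, mul_zero]
      by_contra h
      push_neg at h
      have hε : 0 < J / (2 * I) := by positivity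
      have h1 := hJle _ hε
      rw [hKB, ← hB0'] at h1
      have h2 : J ≤ I * (J / (2 * I)) := by simpa using h1
      have h3 : I * (J / (2 * I)) = J / 2 := by
        field_simp
      rw [h3] at h2
      linarith
    · have hs : 0 < Real.sqrt B := Real.sqrt_pos.2 hBpos
      have hε : 0 < Real.sqrt B / 2 := by positivity
      have h1 := hJle _ hε
      rw [hKB] at h1
      have hBs : Real.sqrt B * Real.sqrt B = B := Real.mul_self_sqrt hB0
      have h2 : B * I / (4 * (Real.sqrt B / 2)) = I * (Real.sqrt B / 2) := by
        have h4 : 4 * (Real.sqrt B / 2) = 2 * Real.sqrt B := by ring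
        rw [h4, ← hBs]
        field_simp
        rw [Real.sqrt_sq hs.le]
      rw [h2] at h1
      linarith
  -- conclusion
  rw [div_le_iff₀ hIpos]
  have hmuJ : μ * J ≤ μ * (I * Real.sqrt B) := mul_le_mul_of_nonneg_left hJsqrt hμ.le
  have hKE : K * (Real.exp (μ * A) / A ^ 2) = B / A ^ 2 * Real.exp (μ * A) * I := by
    rw [hKB]; ring
  nlinarith [houter, hmuJ, hKE]
end

section
/- Let g(x,y) be a bounded measurable real-valued function on [a,b] × [c,d] with a < b and c < d. Suppose |g(x,y)| ≤ A for all (x,y), where A > 0, that (∫_c^d ∫_a^b g²(x,y) dx dy) / ((b−a)(d−c)) = B, and additionally that ∫_c^d ∫_a^b g(x,y) dx dy = 0. Then for any positive real number μ, (∫_c^d ∫_a^b e^{μ g(x,y)} dx dy) / ((b−a)(d−c)) ≤ 1 + (B/A²) e^{μA}. -/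
open MeasureTheory Real Nat

lemma exp_series_aux (c : ℝ) :
    Real.exp c = 1 + c + ∑' n : ℕ, c ^ (n + 2) / ((n + 2)! : ℝ) := by
  have hs : Summable (fun n : ℕ => c ^ n / n !) := Real.summable_pow_div_factorial c
  have h := Summable.sum_add_tsum_nat_add (f := fun n : ℕ => c ^ n / n !) 2 hs
  rw [Real.exp_eq_exp_ℝ, NormedSpace.exp_eq_tsum_div]
  simp only [← h, Finset.sum_range_succ, Finset.sum_range_zero]
  norm_num

lemma key_ineq (A μ t : ℝ) (hA : 0 < A) (hμ : 0 ≤ μ) (ht : |t| ≤ A) :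
    Real.exp (μ * t) ≤ 1 + μ * t + t ^ 2 / A ^ 2 * Real.exp (μ * A) := by
  have hsum1 : Summable (fun n : ℕ => (μ * t) ^ (n + 2) / ((n + 2)! : ℝ)) :=
    (summable_nat_add_iff 2).2 (Real.summable_pow_div_factorial (μ * t))
  have hsum2 : Summable (fun n : ℕ => t ^ 2 / A ^ 2 * ((μ * A) ^ (n + 2) / ((n + 2)! : ℝ))) :=
    ((summable_nat_add_iff 2).2 (Real.summable_pow_div_factorial (μ * A))).mul_left _
  have hterm : ∀ n : ℕ, (μ * t) ^ (n + 2) / ((n + 2)! : ℝ) ≤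
      t ^ 2 / A ^ 2 * ((μ * A) ^ (n + 2) / ((n + 2)! : ℝ)) := by
    intro n
    have hfac : (0:ℝ) < (n + 2)! := by positivity
    rw [mul_div_assoc', div_le_div_iff₀ hfac hfac]
    have h1 : (μ * t) ^ (n + 2) ≤ μ ^ (n + 2) * (t ^ 2 * A ^ n) := by
      calc (μ * t) ^ (n + 2) ≤ |(μ * t) ^ (n + 2)| := le_abs_self _
        _ = μ ^ (n + 2) * (|t| ^ 2 * |t| ^ n) := by
            rw [abs_pow, abs_mul, abs_of_nonneg hμ, mul_pow, pow_add]; ring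
        _ ≤ μ ^ (n + 2) * (t ^ 2 * A ^ n) := by
            rw [sq_abs]
            gcongr
    have h2 : μ ^ (n + 2) * (t ^ 2 * A ^ n) = t ^ 2 / A ^ 2 * (μ * A) ^ (n + 2) := by
      rw [mul_pow, pow_add]
      field_simp
      ring
    calc (μ * t) ^ (n + 2) * ((n + 2)! : ℝ)
        ≤ μ ^ (n + 2) * (t ^ 2 * A ^ n) * ((n + 2)! : ℝ) :=
          mul_le_mul_of_nonneg_right h1 hfac.le
      _ = t ^ 2 / A ^ 2 * (μ * A) ^ (n + 2) * ((n + 2)! : ℝ) := by rw [h2]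
  have hS : (∑' n : ℕ, (μ * t) ^ (n + 2) / ((n + 2)! : ℝ)) ≤
      t ^ 2 / A ^ 2 * ∑' n : ℕ, (μ * A) ^ (n + 2) / ((n + 2)! : ℝ) := by
    rw [← tsum_mul_left]
    exact Summable.tsum_le_tsum hterm hsum1 hsum2
  have hSA : (∑' n : ℕ, (μ * A) ^ (n + 2) / ((n + 2)! : ℝ)) ≤ Real.exp (μ * A) := by
    have := exp_series_aux (μ * A)
    nlinarith [mul_nonneg hμ hA.le]
  have h1 := exp_series_aux (μ * t)
  have h2 : t ^ 2 / A ^ 2 * (∑' n : ℕ, (μ * A) ^ (n + 2) / ((n + 2)! : ℝ)) ≤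
      t ^ 2 / A ^ 2 * Real.exp (μ * A) := by
    exact mul_le_mul_of_nonneg_left hSA (by positivity)
  linarith

theorem stmt8 (a b c d A B : ℝ) (hab : a < b) (hcd : c < d)
    (g : ℝ → ℝ → ℝ) (hmeas : Measurable (Function.uncurry g))
    (hA : 0 < A)
    (hbound : ∀ x ∈ Set.Icc a b, ∀ y ∈ Set.Icc c d, |g x y| ≤ A)
    (hB : (∫ y in c..d, ∫ x in a..b, (g x y)^2) / ((b - a) * (d - c)) = B)
    (hzero : (∫ y in c..d, ∫ x in a..b, g x y) = 0)
    (μ : ℝ) (hμ : 0 < μ) :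
    (∫ y in c..d, ∫ x in a..b, Real.exp (μ * g x y)) / ((b - a) * (d - c))
      ≤ 1 + B / A^2 * Real.exp (μ * A) := by
  have hab' : a ≤ b := hab.le
  have hcd' : c ≤ d := hcd.le
  have harea : 0 < (b - a) * (d - c) := by nlinarith
  set E := Real.exp (μ * A) with hE
  have hE0 : 0 < E := Real.exp_pos _
  have hgy : ∀ y : ℝ, Measurable fun x => g x y := fun y =>
    hmeas.comp (measurable_id.prodMk measurable_const)
  -- inner integrability
  have int_g : ∀ y ∈ Set.Icc c d, IntervalIntegrable (fun x => g x y) volume a b := by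
    intro y hy
    rw [intervalIntegrable_iff_integrableOn_Icc_of_le hab']
    refine Integrable.mono' (integrable_const A) (hgy y).aestronglyMeasurable ?_
    filter_upwards [ae_restrict_mem measurableSet_Icc] with x hx
    simpa [Real.norm_eq_abs] using hbound x hx y hy
  have int_g2 : ∀ y ∈ Set.Icc c d, IntervalIntegrable (fun x => (g x y) ^ 2) volume a b := by
    intro y hy
    rw [intervalIntegrable_iff_integrableOn_Icc_of_le hab']
    refine Integrable.mono' (integrable_const (A ^ 2)) ((hgy y).pow_const 2).aestronglyMeasurable ?_
    filter_upwards [ae_restrict_mem measurableSet_Icc] with x hx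
    rw [Real.norm_eq_abs, abs_pow]
    exact pow_le_pow_left₀ (abs_nonneg _) (hbound x hx y hy) 2
  have int_exp : ∀ y ∈ Set.Icc c d,
      IntervalIntegrable (fun x => Real.exp (μ * g x y)) volume a b := by
    intro y hy
    rw [intervalIntegrable_iff_integrableOn_Icc_of_le hab']
    refine Integrable.mono' (integrable_const E)
      (Real.measurable_exp.comp (measurable_const.mul (hgy y))).aestronglyMeasurable ?_
    filter_upwards [ae_restrict_mem measurableSet_Icc] with x hx
    rw [Real.norm_eq_abs, abs_of_pos (Real.exp_pos _), hE]
    have h1 : g x y ≤ A := (abs_le.1 (hbound x hx y hy)).2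
    exact Real.exp_le_exp.2 (by nlinarith)
  -- pointwise exp bound on the rectangle
  have hpt : ∀ y ∈ Set.Icc c d, ∀ x ∈ Set.Icc a b,
      Real.exp (μ * g x y) ≤ 1 + μ * g x y + E / A ^ 2 * (g x y) ^ 2 := by
    intro y hy x hx
    have := key_ineq A μ (g x y) hA hμ.le (hbound x hx y hy)
    have h2 : (g x y) ^ 2 / A ^ 2 * E = E / A ^ 2 * (g x y) ^ 2 := by ring
    linarith [h2 ▸ this]
  -- inner inequality
  have inner : ∀ y ∈ Set.Icc c d,
      (∫ x in a..b, Real.exp (μ * g x y)) ≤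
        (b - a) + (μ * ∫ x in a..b, g x y) + E / A ^ 2 * ∫ x in a..b, (g x y) ^ 2 := by
    intro y hy
    have h1 : IntervalIntegrable (fun x => (1 : ℝ) + μ * g x y) volume a b :=
      intervalIntegrable_const.add ((int_g y hy).const_mul μ)
    have h2 : IntervalIntegrable (fun x => E / A ^ 2 * (g x y) ^ 2) volume a b :=
      (int_g2 y hy).const_mul _
    have hmono := intervalIntegral.integral_mono_on hab' (int_exp y hy) (h1.add h2)
      (fun x hx => hpt y hy x hx)
    calc (∫ x in a..b, Real.exp (μ * g x y))
        ≤ ∫ x in a..b, ((1 + μ * g x y) + E / A ^ 2 * (g x y) ^ 2) := hmono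
      _ = (b - a) + (μ * ∫ x in a..b, g x y) + E / A ^ 2 * ∫ x in a..b, (g x y) ^ 2 := by
          rw [intervalIntegral.integral_add h1 h2,
            intervalIntegral.integral_add intervalIntegrable_const ((int_g y hy).const_mul μ),
            intervalIntegral.integral_const, intervalIntegral.integral_const_mul,
            intervalIntegral.integral_const_mul, smul_eq_mul, mul_one]
  -- outer integrability
  have outer_int : ∀ (f : ℝ → ℝ → ℝ), Measurable (Function.uncurry f) →
      ∀ C : ℝ, (∀ y ∈ Set.Icc c d, ∀ x ∈ Set.uIoc a b, ‖f x y‖ ≤ C) →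
      IntervalIntegrable (fun y => ∫ x in a..b, f x y) volume c d := by
    intro f hf C hC
    rw [intervalIntegrable_iff_integrableOn_Icc_of_le hcd']
    have hsm : StronglyMeasurable fun y => ∫ x in Set.Ioc a b, f x y :=
      StronglyMeasurable.integral_prod_left hf.stronglyMeasurable
    have heq : (fun y => ∫ x in a..b, f x y) = fun y => ∫ x in Set.Ioc a b, f x y := by
      funext y; exact intervalIntegral.integral_of_le hab'
    refine Integrable.mono' (integrable_const (C * |b - a|)) (heq ▸ hsm.aestronglyMeasurable) ?_
    filter_upwards [ae_restrict_mem measurableSet_Icc] with y hy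
    exact intervalIntegral.norm_integral_le_of_norm_le_const (hC y hy)
  have oi_exp : IntervalIntegrable (fun y => ∫ x in a..b, Real.exp (μ * g x y)) volume c d := by
    refine outer_int _ (Real.measurable_exp.comp (measurable_const.mul hmeas)) E ?_
    intro y hy x hx
    have hx' : x ∈ Set.Icc a b := Set.Ioc_subset_Icc_self ((Set.uIoc_of_le hab') ▸ hx)
    rw [Real.norm_eq_abs, abs_of_pos (Real.exp_pos _), hE]
    have h1 : g x y ≤ A := (abs_le.1 (hbound x hx' y hy)).2
    exact Real.exp_le_exp.2 (by nlinarith)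
  have oi_g : IntervalIntegrable (fun y => ∫ x in a..b, g x y) volume c d := by
    refine outer_int _ hmeas A ?_
    intro y hy x hx
    have hx' : x ∈ Set.Icc a b := Set.Ioc_subset_Icc_self ((Set.uIoc_of_le hab') ▸ hx)
    simpa [Real.norm_eq_abs] using hbound x hx' y hy
  have oi_g2 : IntervalIntegrable (fun y => ∫ x in a..b, (g x y) ^ 2) volume c d := by
    refine outer_int (fun x y => (g x y) ^ 2) (hmeas.pow_const 2) (A ^ 2) ?_
    intro y hy x hx
    have hx' : x ∈ Set.Icc a b := Set.Ioc_subset_Icc_self ((Set.uIoc_of_le hab') ▸ hx)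
    rw [Real.norm_eq_abs, abs_pow]
    exact pow_le_pow_left₀ (abs_nonneg _) (hbound x hx' y hy) 2
  -- outer inequality
  have h1out : IntervalIntegrable (fun y => (b - a) + (μ * ∫ x in a..b, g x y)) volume c d :=
    intervalIntegrable_const.add (oi_g.const_mul μ)
  have h2out : IntervalIntegrable (fun y => E / A ^ 2 * ∫ x in a..b, (g x y) ^ 2) volume c d :=
    oi_g2.const_mul _
  have houter := intervalIntegral.integral_mono_on hcd' oi_exp (h1out.add h2out)
    (fun y hy => inner y hy)
  have hG2 : (∫ y in c..d, ∫ x in a..b, (g x y) ^ 2) = B * ((b - a) * (d - c)) := by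
    rw [div_eq_iff harea.ne'] at hB
    linarith
  have hRHS : (∫ y in c..d, (((b - a) + (μ * ∫ x in a..b, g x y))
        + E / A ^ 2 * ∫ x in a..b, (g x y) ^ 2))
      = (b - a) * (d - c) + E / A ^ 2 * (B * ((b - a) * (d - c))) := by
    rw [intervalIntegral.integral_add h1out h2out,
      intervalIntegral.integral_add intervalIntegrable_const (oi_g.const_mul μ),
      intervalIntegral.integral_const, intervalIntegral.integral_const_mul,
      intervalIntegral.integral_const_mul, hzero, hG2, smul_eq_mul]
    ring
  rw [hRHS] at houter
  rw [div_le_iff₀ harea]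
  have hA2 : (0:ℝ) < A ^ 2 := by positivity
  calc (∫ y in c..d, ∫ x in a..b, Real.exp (μ * g x y))
      ≤ (b - a) * (d - c) + E / A ^ 2 * (B * ((b - a) * (d - c))) := houter
    _ = (1 + B / A ^ 2 * E) * ((b - a) * (d - c)) := by field_simp
end

section
/- Let n ≥ 1 and let P(x) = Σ_{m=0}^n (α_m cos(mx) + β_m sin(mx)) be a real trigonometric polynomial of order n. Let M = max_{x ∈ ℝ} |P(x)|, and let θ be a real number with 0 < θ < 1. Then there exists a closed interval I ⊆ ℝ of length at least (1−θ)/n such that |P(x)| ≥ θM for every x ∈ I. -/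
open Finset Real

section aux
open Set Polynomial


lemma trig_hasDerivAt (n : ℕ) (a b : ℕ → ℝ) (x : ℝ) :
    HasDerivAt (fun x : ℝ => ∑ m ∈ range (n+1), (a m * Real.cos (m * x) + b m * Real.sin (m * x)))
      (∑ m ∈ range (n+1), (m * b m * Real.cos (m * x) - m * a m * Real.sin (m * x))) x := by
  apply HasDerivAt.fun_sum
  intro m _
  have h1 : HasDerivAt (fun x : ℝ => (m : ℝ) * x) (m : ℝ) x := by
    simpa using (hasDerivAt_id x).const_mul (m : ℝ)
  have hc : HasDerivAt (fun x : ℝ => Real.cos (m * x)) (-Real.sin (m * x) * m) x :=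
    (Real.hasDerivAt_cos (m * x)).comp x h1
  have hs : HasDerivAt (fun x : ℝ => Real.sin (m * x)) (Real.cos (m * x) * m) x :=
    (Real.hasDerivAt_sin (m * x)).comp x h1
  have := ((hc.const_mul (a m)).fun_add (hs.const_mul (b m)))
  convert this using 1
  ring

lemma cos_nat_pi (k : ℕ) : Real.cos (k * π) = (-1) ^ k := by
  induction k with
  | zero => simp
  | succ k ih =>
    have : ((k:ℝ)+1) * π = k * π + π := by ring
    push_cast
    rw [this, Real.cos_add_pi, ih]
    ring


lemma ivt_zero {f : ℝ → ℝ} (hf : Continuous f) {p q : ℝ} (hpq : p < q)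
    (h1 : f p < 0) (h2 : 0 < f q) : ∃ z ∈ Ioo p q, f z = 0 := by
  have := intermediate_value_Ioo hpq.le hf.continuousOn (a := p) (b := q)
  have h0 : (0:ℝ) ∈ Ioo (f p) (f q) := ⟨h1, h2⟩
  obtain ⟨z, hz, hz0⟩ := this h0
  exact ⟨z, hz, hz0⟩

lemma ivt_zero' {f : ℝ → ℝ} (hf : Continuous f) {p q : ℝ} (hpq : p < q)
    (h1 : 0 < f p) (h2 : f q < 0) : ∃ z ∈ Ioo p q, f z = 0 := by
  obtain ⟨z, hz, hz0⟩ := ivt_zero (f := fun x => -f x) (by continuity) hpq (by simpa) (by simpa)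
  exact ⟨z, hz, by linarith⟩

lemma deriv_pos_sides {R : ℝ → ℝ} {d ξ : ℝ} (hR : HasDerivAt R d ξ) (hd : 0 < d)
    (hRξ : R ξ = 0) {ε : ℝ} (hε : 0 < ε) :
    (∃ a ∈ Ioo (ξ - ε) ξ, R a < 0) ∧ (∃ b ∈ Ioo ξ (ξ + ε), 0 < R b) := by
  have hslope : Filter.Tendsto (slope R ξ) (nhdsWithin ξ {ξ}ᶜ) (nhds d) :=
    hasDerivAt_iff_tendsto_slope.1 hR
  have hev : ∀ᶠ y in nhdsWithin ξ {ξ}ᶜ, 0 < slope R ξ y :=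
    hslope.eventually (eventually_gt_nhds hd)
  constructor
  · have h1 : ∀ᶠ y in nhdsWithin ξ (Iio ξ), 0 < slope R ξ y :=
      hev.filter_mono (nhdsWithin_mono _ (fun y hy => ne_of_lt hy))
    have h2 : Ioo (ξ - ε) ξ ∈ nhdsWithin ξ (Iio ξ) :=
      Ioo_mem_nhdsLT_of_mem ⟨by linarith, le_refl _⟩
    obtain ⟨y, hy1, hy2⟩ := (h1.and (Filter.eventually_of_mem h2 (fun y hy => hy))).exists
    refine ⟨y, hy2, ?_⟩
    have hylt : y < ξ := hy2.2
    have : slope R ξ y = R y / (y - ξ) := by simp [slope, hRξ, vsub_eq_sub]; ring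
    rw [this] at hy1
    by_contra h
    push_neg at h
    have : R y / (y - ξ) ≤ 0 := div_nonpos_of_nonneg_of_nonpos h (by linarith)
    linarith
  · have h1 : ∀ᶠ y in nhdsWithin ξ (Ioi ξ), 0 < slope R ξ y :=
      hev.filter_mono (nhdsWithin_mono _ (fun y hy => ne_of_gt hy))
    have h2 : Ioo ξ (ξ + ε) ∈ nhdsWithin ξ (Ioi ξ) :=
      Ioo_mem_nhdsGT_of_mem ⟨le_refl _, by linarith⟩
    obtain ⟨y, hy1, hy2⟩ := (h1.and (Filter.eventually_of_mem h2 (fun y hy => hy))).exists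
    refine ⟨y, hy2, ?_⟩
    have hygt : ξ < y := hy2.1
    have : slope R ξ y = R y / (y - ξ) := by simp [slope, hRξ, vsub_eq_sub]; ring
    rw [this] at hy1
    by_contra h
    push_neg at h
    have : R y / (y - ξ) ≤ 0 := div_nonpos_of_nonpos_of_nonneg h (by linarith)
    linarith


lemma trig_vanish (n : ℕ) (a b : ℕ → ℝ) (f : ℝ → ℝ)
    (hf : ∀ x, f x = ∑ m ∈ range (n+1), (a m * Real.cos (m * x) + b m * Real.sin (m * x)))
    (t0 : ℝ) (s : Finset ℝ) (hsz : ∀ x ∈ s, f x = 0)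
    (hmem : ∀ x ∈ s, x ∈ Set.Ico t0 (t0 + 2*π))
    (hcard : 2*n + 1 ≤ s.card) : ∀ x, f x = 0 := by
  set Q : Polynomial ℂ := ∑ m ∈ range (n+1),
      (C ((a m : ℂ) - (b m : ℂ) * Complex.I) * X ^ (n + m)
        + C ((a m : ℂ) + (b m : ℂ) * Complex.I) * X ^ (n - m)) with hQ
  have key : ∀ x : ℝ, Q.eval (Complex.exp (x * Complex.I))
      = 2 * Complex.exp (n * x * Complex.I) * (f x : ℂ) := by
    intro x
    rw [hf x, hQ]
    rw [Polynomial.eval_finset_sum]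
    push_cast
    rw [Finset.mul_sum]
    apply Finset.sum_congr rfl
    intro m hm
    have hm' : m ≤ n := Nat.lt_succ_iff.mp (Finset.mem_range.mp hm)
    simp only [Polynomial.eval_add, Polynomial.eval_mul, Polynomial.eval_C,
      Polynomial.eval_pow, Polynomial.eval_X]
    rw [← Complex.exp_nat_mul, ← Complex.exp_nat_mul]
    push_cast [Nat.cast_sub hm']
    have e1 : ((n : ℂ) + m) * (x * Complex.I) = n * x * Complex.I + (m * x : ℂ) * Complex.I := by
      ring
    have e2 : ((n : ℂ) - m) * (x * Complex.I) = n * x * Complex.I + (-(m * x : ℂ)) * Complex.I := by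
      ring
    rw [e1, e2, Complex.exp_add, Complex.exp_add, Complex.exp_mul_I, Complex.exp_mul_I,
      Complex.exp_mul_I, Complex.cos_neg, Complex.sin_neg]
    linear_combination (-2*(b m : ℂ) * Complex.sin (m * x) *
      (Complex.cos (n * x) + Complex.I * Complex.sin (n * x))) * Complex.I_sq
  have hQdeg : Q.natDegree ≤ 2 * n := by
    rw [hQ]
    apply Polynomial.natDegree_sum_le_of_forall_le
    intro m hm
    have hm' : m ≤ n := Nat.lt_succ_iff.mp (Finset.mem_range.mp hm)
    apply le_trans (Polynomial.natDegree_add_le _ _)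
    apply max_le
    · exact le_trans (Polynomial.natDegree_C_mul_le _ _) (by rw [Polynomial.natDegree_X_pow]; omega)
    · exact le_trans (Polynomial.natDegree_C_mul_le _ _) (by rw [Polynomial.natDegree_X_pow]; omega)
  have hinj : Set.InjOn (fun x : ℝ => Complex.exp (x * Complex.I)) s := by
    intro x hx y hy hxy
    simp only at hxy
    rw [Complex.exp_eq_exp_iff_exists_int] at hxy
    obtain ⟨k, hk⟩ := hxy
    have him := congrArg Complex.im hk
    simp [Complex.add_im, Complex.mul_im] at him
    -- him : x = y + k * (2 * π) (in some form)
    have h1 := hmem x hx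
    have h2 := hmem y hy
    have hπ : 0 < π := Real.pi_pos
    have hk1 : (-1 : ℝ) < k := by
      rcases h1 with ⟨h1a, h1b⟩; rcases h2 with ⟨h2a, h2b⟩
      nlinarith
    have hk2 : (k : ℝ) < 1 := by
      rcases h1 with ⟨h1a, h1b⟩; rcases h2 with ⟨h2a, h2b⟩
      nlinarith
    have hk0 : k = 0 := by
      have a1 : (-1 : ℤ) < k := by exact_mod_cast hk1
      have a2 : k < (1 : ℤ) := by exact_mod_cast hk2
      omega
    rw [hk0] at him
    simpa using him
  have hQ0 : Q = 0 := by
    apply Polynomial.eq_zero_of_natDegree_lt_card_of_eval_eq_zero' Q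
      (s.image (fun x : ℝ => Complex.exp (x * Complex.I)))
    · intro z hz
      obtain ⟨x, hx, rfl⟩ := Finset.mem_image.mp hz
      rw [key x, hsz x hx]
      simp
    · rw [Finset.card_image_of_injOn hinj]
      omega
  intro x
  have := key x
  rw [hQ0] at this
  simp only [Polynomial.eval_zero] at this
  have hexp : Complex.exp ((n : ℂ) * x * Complex.I) ≠ 0 := Complex.exp_ne_zero _
  have : (f x : ℂ) = 0 := by
    field_simp at this
    rcases mul_eq_zero.1 this.symm with h | h
    · exact absurd h (mul_ne_zero two_ne_zero hexp)
    · exact h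
  exact_mod_cast this

lemma bernstein_ineq (n : ℕ) (hn : 1 ≤ n) (a b : ℕ → ℝ) (f g : ℝ → ℝ)
    (hf : ∀ x, f x = ∑ m ∈ range (n+1), (a m * Real.cos (m * x) + b m * Real.sin (m * x)))
    (hg : ∀ x, g x = ∑ m ∈ range (n+1), (m * b m * Real.cos (m * x) - m * a m * Real.sin (m * x)))
    (M : ℝ) (hM : ∀ x, |f x| ≤ M) (ξ : ℝ) : g ξ ≤ n * M := by
  by_contra hcon
  push_neg at hcon
  have hn0 : (0:ℝ) < n := by exact_mod_cast hn
  have hM0 : 0 ≤ M := le_trans (abs_nonneg _) (hM 0)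
  set M' : ℝ := (M + g ξ / n) / 2 with hM'def
  have hMgn : M < g ξ / n := by rw [lt_div_iff₀ hn0]; linarith
  have hMM' : M < M' := by rw [hM'def]; linarith
  have hM'0 : 0 < M' := lt_of_le_of_lt hM0 hMM'
  have hgM' : n * M' < g ξ := by
    have : M' < g ξ / n := by rw [hM'def]; linarith
    calc n * M' < n * (g ξ / n) := by exact (mul_lt_mul_iff_right₀ hn0).2 this
    _ = g ξ := by field_simp
  have hf' : ∀ x, HasDerivAt f (g x) x := by
    intro x
    have hfe : f = fun x => ∑ m ∈ range (n+1), (a m * Real.cos (m * x) + b m * Real.sin (m * x)) :=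
      funext hf
    rw [hg x, hfe]
    exact trig_hasDerivAt n a b x
  have hfc : Continuous f := by
    have : Differentiable ℝ f := fun x => (hf' x).differentiableAt
    exact this.continuous
  have hfξM' : |f ξ / M'| < 1 := by
    rw [abs_div, abs_of_pos hM'0]
    exact (div_lt_one hM'0).2 (lt_of_le_of_lt (hM ξ) hMM')
  obtain ⟨hfξ1, hfξ2⟩ := abs_lt.1 hfξM'
  set φ := Real.arcsin (f ξ / M') with hφdef
  have hφ1 : -(π/2) < φ := Real.neg_pi_div_two_lt_arcsin.2 hfξ1
  have hφ2 : φ < π/2 := Real.arcsin_lt_pi_div_two.2 hfξ2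
  have hsinφ : Real.sin φ = f ξ / M' := Real.sin_arcsin hfξ1.le hfξ2.le
  set c : ℝ := ξ - φ / n with hcdef
  set R : ℝ → ℝ := fun x => f x - M' * Real.sin (n * (x - c)) with hRdef
  set g1 : ℝ → ℝ := fun x => g x - n * M' * Real.cos (n * (x - c)) with hg1def
  have hR' : ∀ x, HasDerivAt R (g1 x) x := by
    intro x
    have h1 : HasDerivAt (fun x : ℝ => (n:ℝ) * (x - c)) (n:ℝ) x := by
      simpa using ((hasDerivAt_id x).sub_const c).const_mul (n:ℝ)
    have h2 : HasDerivAt (fun x : ℝ => Real.sin (n * (x - c)))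
        (Real.cos (n * (x - c)) * n) x := (Real.hasDerivAt_sin _).comp x h1
    have h3 := (hf' x).fun_sub (h2.const_mul M')
    refine h3.congr_deriv ?_
    show _ = g x - (n:ℝ) * M' * Real.cos (n * (x - c))
    ring
  have hRc : Continuous R := by
    have : Differentiable ℝ R := fun x => (hR' x).differentiableAt
    exact this.continuous
  have hnξc : (n:ℝ) * (ξ - c) = φ := by rw [hcdef]; field_simp; ring
  have hRξ : R ξ = 0 := by
    simp only [hRdef, hnξc, hsinφ]
    field_simp
    ring
  have hg1ξ : 0 < g1 ξ := by
    simp only [hg1def, hnξc]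
    have h4 : Real.cos φ ≤ 1 := Real.cos_le_one φ
    nlinarith [mul_le_mul_of_nonneg_left h4 (by positivity : (0:ℝ) ≤ (n:ℝ)*M')]
  set y : ℕ → ℝ := fun k => c - π/(2*n) + k * (π/n) with hydef
  have hπn : 0 < π/n := by positivity
  have hymono : ∀ k l : ℕ, k < l → y k < y l := by
    intro k l hkl
    simp only [hydef]
    have : (k:ℝ) * (π/n) < l * (π/n) := by
      apply mul_lt_mul_of_pos_right _ hπn
      exact_mod_cast hkl
    linarith
  have hsiny : ∀ k : ℕ, Real.sin (n * (y k - c)) = -(-1:ℝ)^k := by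
    intro k
    have he : (n:ℝ) * (y k - c) = k * π - π/2 := by
      simp only [hydef]
      field_simp
      ring
    rw [he, Real.sin_sub_pi_div_two, cos_nat_pi]
  have hRy : ∀ k : ℕ, R (y k) = f (y k) + M' * (-1)^k := by
    intro k
    simp only [hRdef, hsiny k]
    ring
  have hRyE : ∀ k : ℕ, Even k → 0 < R (y k) := by
    intro k hk
    rw [hRy k, hk.neg_one_pow]
    have := (abs_le.1 (hM (y k))).1
    linarith
  have hRyO : ∀ k : ℕ, Odd k → R (y k) < 0 := by
    intro k hk
    rw [hRy k, hk.neg_one_pow]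
    have := (abs_le.1 (hM (y k))).2
    linarith
  have zero_between : ∀ k : ℕ, ∃ z ∈ Ioo (y k) (y (k+1)), R z = 0 := by
    intro k
    rcases Nat.even_or_odd k with hk | hk
    · exact ivt_zero' hRc (hymono k (k+1) (Nat.lt_succ_self k)) (hRyE k hk)
        (hRyO (k+1) (Even.add_one hk))
    · exact ivt_zero hRc (hymono k (k+1) (Nat.lt_succ_self k)) (hRyO k hk)
        (hRyE (k+1) (Odd.add_one hk))
  have hy0 : y 0 = ξ - (φ + π/2)/n := by
    simp only [hydef, hcdef]
    push_cast
    field_simp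
    ring
  have hy1 : y 1 = ξ + (π/2 - φ)/n := by
    simp only [hydef, hcdef]
    push_cast
    field_simp
    ring
  have hξy0 : y 0 < ξ := by
    rw [hy0]
    have : 0 < (φ + π/2)/n := by
      apply div_pos _ hn0
      linarith
    linarith
  have hξy1 : ξ < y 1 := by
    rw [hy1]
    have : 0 < (π/2 - φ)/n := by
      apply div_pos _ hn0
      linarith
    linarith
  set ε : ℝ := min (ξ - y 0) (y 1 - ξ) with hεdef
  have hε0 : 0 < ε := lt_min (by linarith) (by linarith)
  obtain ⟨⟨aL, haLmem, haL⟩, bR, hbRmem, hbR⟩ := deriv_pos_sides (hR' ξ) hg1ξ hRξ hε0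
  have haLy0 : y 0 < aL := by
    have := haLmem.1
    have h5 : ξ - ε ≥ y 0 := by
      have := min_le_left (ξ - y 0) (y 1 - ξ)
      simp only [← hεdef] at this
      linarith
    linarith
  have hbRy1 : bR < y 1 := by
    have := hbRmem.2
    have h5 : ξ + ε ≤ y 1 := by
      have := min_le_right (ξ - y 0) (y 1 - ξ)
      simp only [← hεdef] at this
      linarith
    linarith
  obtain ⟨u, huIoo, hu0⟩ := ivt_zero' hRc haLy0 (hRyE 0 Even.zero) haL
  obtain ⟨v, hvIoo, hv0⟩ := ivt_zero' hRc hbRy1 hbR (hRyO 1 odd_one)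
  have huξ : u < ξ := lt_trans huIoo.2 haLmem.2
  have hξv : ξ < v := lt_trans hbRmem.1 hvIoo.1
  have huy0 : y 0 < u := huIoo.1
  have hvy1 : v < y 1 := hvIoo.2
  -- assemble the 2n+2 zeros of R
  have hexZ : ∀ i : ℕ, ∃ z : ℝ, R z = 0 ∧
      (2 ≤ i → (z ∈ Ioo (y (i-2)) (y (i-1)) ∧ (i = 2 → ξ < z))) := by
    intro i
    rcases Nat.lt_or_ge i 2 with hi | hi
    · exact ⟨u, hu0, fun h => absurd h (by omega)⟩
    · rcases Nat.lt_or_ge i 3 with hi3 | hi3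
      · have hi2 : i = 2 := by omega
        subst hi2
        refine ⟨v, hv0, fun _ => ⟨?_, fun _ => hξv⟩⟩
        simpa using ⟨lt_trans hξy0 hξv, hvy1⟩
      · obtain ⟨z, hzIoo, hz0⟩ := zero_between (i-2)
        refine ⟨z, hz0, fun _ => ⟨?_, fun h2 => absurd h2 (by omega)⟩⟩
        have : i - 2 + 1 = i - 1 := by omega
        rwa [this] at hzIoo
  set Z : ℕ → ℝ := fun i => if i = 0 then u else if i = 1 then ξ else
    Classical.choose (hexZ i) with hZdef
  have hZzero : ∀ i, R (Z i) = 0 := by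
    intro i
    simp only [hZdef]
    split_ifs with h1 h2
    · exact hu0
    · exact hRξ
    · exact (Classical.choose_spec (hexZ i)).1
  have hZmem : ∀ i, 2 ≤ i → Z i ∈ Ioo (y (i-2)) (y (i-1)) := by
    intro i hi
    simp only [hZdef]
    split_ifs with h1 h2
    · omega
    · omega
    · exact ((Classical.choose_spec (hexZ i)).2 hi).1
  have hZ2eq : Z 2 = Classical.choose (hexZ 2) := by
    simp only [hZdef]
    norm_num
  have hZ2ξ : ξ < Z 2 := by
    rw [hZ2eq]
    exact ((Classical.choose_spec (hexZ 2)).2 (le_refl 2)).2 rfl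
  have hZlt : ∀ i : ℕ, Z i < Z (i+1) := by
    intro i
    rcases Nat.lt_or_ge i 2 with hi | hi
    · interval_cases i
      · show Z 0 < Z 1
        simp only [hZdef]
        norm_num
        exact huξ
      · show Z 1 < Z 2
        simp only [hZdef] at hZ2ξ ⊢
        norm_num at hZ2ξ ⊢
        exact hZ2ξ
    · have h1 := (hZmem i hi).2
      have h2 := (hZmem (i+1) (by omega)).1
      have he : i + 1 - 2 = i - 1 := by omega
      rw [he] at h2
      exact lt_trans h1 h2
  have hZmono : ∀ i j : ℕ, i < j → Z i < Z j := by
    intro i j hij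
    induction j with
    | zero => omega
    | succ j ih =>
      rcases Nat.lt_or_ge i j with h | h
      · exact lt_trans (ih h) (hZlt j)
      · have : i = j := by omega
        subst this
        exact hZlt i
  -- zeros of g1 between consecutive Z's
  have hexW : ∀ i : ℕ, ∃ z : ℝ, R z = 0 ∨ (z ∈ Ioo (Z i) (Z (i+1)) ∧ g1 z = 0) := by
    intro i
    obtain ⟨z, hzIoo, hz0⟩ := exists_hasDerivAt_eq_zero (hZlt i) hRc.continuousOn
      (by rw [hZzero i, hZzero (i+1)]) (fun x _ => hR' x)
    exact ⟨z, Or.inr ⟨hzIoo, hz0⟩⟩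
  have hexW' : ∀ i : ℕ, ∃ z : ℝ, z ∈ Ioo (Z i) (Z (i+1)) ∧ g1 z = 0 := by
    intro i
    exact exists_hasDerivAt_eq_zero (hZlt i) hRc.continuousOn
      (by rw [hZzero i, hZzero (i+1)]) (fun x _ => hR' x)
  set w : ℕ → ℝ := fun i => Classical.choose (hexW' i) with hwdef
  have hw : ∀ i, w i ∈ Ioo (Z i) (Z (i+1)) ∧ g1 (w i) = 0 :=
    fun i => Classical.choose_spec (hexW' i)
  have hwmono : ∀ i j : ℕ, i < j → w i < w j := by
    intro i j hij
    have h1 : w i < Z (i+1) := (hw i).1.2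
    have h2 : Z j < w j := (hw j).1.1
    rcases Nat.lt_or_ge (i+1) j with h | h
    · exact lt_trans (lt_trans h1 (hZmono (i+1) j h)) h2
    · have : i + 1 = j := by omega
      subst this
      exact lt_trans h1 h2
  -- the window
  have hy2n : y (2*n) = y 0 + 2*π := by
    simp only [hydef]
    push_cast
    field_simp
    ring
  have hwlow : ∀ i, y 0 < w i := by
    intro i
    have h1 : Z 0 < w 0 := (hw 0).1.1
    have h2 : Z 0 = u := by simp [hZdef]
    rcases Nat.eq_zero_or_pos i with h | h
    · subst h; rw [h2] at h1; linarith
    · have := hwmono 0 i h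
      rw [h2] at h1
      linarith
  have hwhigh : ∀ i, i ≤ 2*n → w i < y 0 + 2*π := by
    intro i hi
    have h1 : w i < Z (i+1) := (hw i).1.2
    have h2 : Z (i+1) ≤ Z (2*n+1) := by
      rcases Nat.lt_or_ge (i+1) (2*n+1) with h | h
      · exact (hZmono (i+1) (2*n+1) h).le
      · have : i + 1 = 2*n+1 := by omega
        rw [this]
    have h3 := (hZmem (2*n+1) (by omega)).2
    have he : 2*n+1-1 = 2*n := by omega
    rw [he] at h3
    rw [← hy2n]
    linarith
  -- build the finset
  set s : Finset ℝ := (range (2*n+1)).image w with hsdef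
  have hwinj : Set.InjOn w ↑(range (2*n+1)) := by
    intro i _ j _ hij
    by_contra hne
    rcases Nat.lt_or_ge i j with h | h
    · exact absurd hij (ne_of_lt (hwmono i j h))
    · have : j < i := by omega
      exact absurd hij.symm (ne_of_lt (hwmono j i this))
  have hscard : s.card = 2*n+1 := by
    rw [hsdef, Finset.card_image_of_injOn hwinj, Finset.card_range]
  -- coefficients of g1
  set A : ℕ → ℝ := fun m => m * b m - (if m = n then n * M' * Real.cos (n*c) else 0) with hAdef
  set B : ℕ → ℝ := fun m => -(m * a m) - (if m = n then n * M' * Real.sin (n*c) else 0) with hBdef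
  have hg1trig : ∀ x, g1 x = ∑ m ∈ range (n+1), (A m * Real.cos (m * x) + B m * Real.sin (m * x)) := by
    intro x
    have hsplit : ∀ m ∈ range (n+1),
        A m * Real.cos (m * x) + B m * Real.sin (m * x)
        = (m * b m * Real.cos (m * x) - m * a m * Real.sin (m * x))
          - (if m = n then (n * M' * Real.cos (n*c)) * Real.cos (m * x)
              + (n * M' * Real.sin (n*c)) * Real.sin (m * x) else 0) := by
      intro m _
      simp only [hAdef, hBdef]
      split_ifs with h
      · ring
      · ring
    rw [Finset.sum_congr rfl hsplit, Finset.sum_sub_distrib]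
    have hite : ∑ m ∈ range (n+1), (if m = n then (n * M' * Real.cos (n*c)) * Real.cos (m * x)
        + (n * M' * Real.sin (n*c)) * Real.sin (m * x) else 0)
        = (n * M' * Real.cos (n*c)) * Real.cos (n * x)
          + (n * M' * Real.sin (n*c)) * Real.sin (n * x) := by
      rw [Finset.sum_ite_eq' (range (n+1)) n]
      simp [Finset.mem_range]
    rw [hite, ← hg x]
    simp only [hg1def]
    have : (n:ℝ) * (x - c) = n*x - n*c := by ring
    rw [this, Real.cos_sub]
    ring
  -- apply the vanishing lemma
  have hvan := trig_vanish n A B g1 hg1trig (y 0) s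
    (by
      intro x hx
      rw [hsdef] at hx
      obtain ⟨i, hi, rfl⟩ := Finset.mem_image.mp hx
      exact (hw i).2)
    (by
      intro x hx
      rw [hsdef] at hx
      obtain ⟨i, hi, rfl⟩ := Finset.mem_image.mp hx
      rw [Finset.mem_range] at hi
      exact ⟨(hwlow i).le, hwhigh i (by omega)⟩)
    (by rw [hscard])
  have := hvan ξ
  linarith

lemma key_lower (n : ℕ) (hn : 1 ≤ n) (a b : ℕ → ℝ) (f : ℝ → ℝ)
    (hf : ∀ x, f x = ∑ m ∈ range (n+1), (a m * Real.cos (m * x) + b m * Real.sin (m * x)))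
    (M : ℝ) (hM : ∀ x, |f x| ≤ M) (x0 : ℝ) (hx0 : f x0 = M)
    (θ : ℝ) (hθ1 : θ < 1) :
    ∀ x ∈ Icc x0 (x0 + (1-θ)/n), θ * M ≤ f x := by
  have hn0 : (0:ℝ) < n := by exact_mod_cast hn
  have hM0 : 0 ≤ M := le_trans (abs_nonneg _) (hM x0)
  set g : ℝ → ℝ := fun x => ∑ m ∈ range (n+1),
      (m * b m * Real.cos (m * x) - m * a m * Real.sin (m * x)) with hgdef
  have hf' : ∀ x, HasDerivAt f (g x) x := by
    intro x
    have hfe : f = fun x => ∑ m ∈ range (n+1), (a m * Real.cos (m * x) + b m * Real.sin (m * x)) :=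
      funext hf
    rw [hfe]
    exact trig_hasDerivAt n a b x
  have hfc : Continuous f := by
    have : Differentiable ℝ f := fun x => (hf' x).differentiableAt
    exact this.continuous
  have hbound : ∀ ξ, -(n*M) ≤ g ξ := by
    intro ξ
    have hfneg : ∀ x, -f x = ∑ m ∈ range (n+1),
        ((-a m) * Real.cos (m * x) + (-b m) * Real.sin (m * x)) := by
      intro x
      rw [hf x, ← Finset.sum_neg_distrib]
      exact Finset.sum_congr rfl (by intros; ring)
    have hgneg : ∀ x, -g x = ∑ m ∈ range (n+1),
        (m * (-b m) * Real.cos (m * x) - m * (-a m) * Real.sin (m * x)) := by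
      intro x
      rw [hgdef, ← Finset.sum_neg_distrib]
      exact Finset.sum_congr rfl (by intros; ring)
    have := bernstein_ineq n hn (fun m => -a m) (fun m => -b m) (fun x => -f x) (fun x => -g x)
      hfneg hgneg M (by intro x; simpa using hM x) ξ
    linarith
  intro x hx
  rcases eq_or_lt_of_le hx.1 with heq | hlt
  · rw [← heq, hx0]
    nlinarith
  · obtain ⟨c, _, hc⟩ := exists_hasDerivAt_eq_slope f g hlt hfc.continuousOn (fun y _ => hf' y)
    rw [hx0] at hc
    have hxx0 : 0 < x - x0 := by linarith
    have h3 : g c * (x - x0) = f x - M := by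
      rw [hc]
      field_simp
    have h1 := hbound c
    have h2 : x - x0 ≤ (1-θ)/n := by have := hx.2; linarith
    have h4 : -(n*M) * (x - x0) ≤ g c * (x - x0) := mul_le_mul_of_nonneg_right h1 hxx0.le
    have h5 : (n:ℝ) * M * ((1-θ)/n) = (1-θ)*M := by field_simp
    have h6 : (n:ℝ) * M * (x - x0) ≤ (n:ℝ) * M * ((1-θ)/n) :=
      mul_le_mul_of_nonneg_left h2 (by positivity)
    nlinarith
end aux

theorem stmt9 (n : ℕ) (hn : 1 ≤ n) (α β : ℕ → ℝ)
    (P : ℝ → ℝ)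
    (hP : ∀ x : ℝ, P x = ∑ m ∈ range (n+1), (α m * Real.cos (m * x) + β m * Real.sin (m * x)))
    (M : ℝ) (hM : M = ⨆ x : ℝ, |P x|)
    (θ : ℝ) (hθ0 : 0 < θ) (hθ1 : θ < 1) :
    ∃ u v : ℝ, (1 - θ) / n ≤ v - u ∧ ∀ x ∈ Set.Icc u v, θ * M ≤ |P x| := by
  have hn0 : (0:ℝ) < n := by exact_mod_cast hn
  have hπ : 0 < π := Real.pi_pos
  have hPc : Continuous P := by
    have hfe : P = fun x => ∑ m ∈ range (n+1), (α m * Real.cos (m * x) + β m * Real.sin (m * x)) :=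
      funext hP
    have : Differentiable ℝ P := by
      rw [hfe]
      exact fun x => (trig_hasDerivAt n α β x).differentiableAt
    exact this.continuous
  have hper : Function.Periodic P (2*π) := by
    intro x
    rw [hP, hP]
    apply Finset.sum_congr rfl
    intro m _
    have e1 : (m:ℝ) * (x + 2*π) = m * x + m * (2*π) := by ring
    rw [e1, Real.cos_add_nat_mul_two_pi, Real.sin_add_nat_mul_two_pi]
  obtain ⟨x0, hx0mem, hmax⟩ := isCompact_Icc.exists_isMaxOn
    (s := Set.Icc (0:ℝ) (2*π)) ⟨0, Set.mem_Icc.2 ⟨le_refl 0, by positivity⟩⟩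
    (hPc.abs.continuousOn)
  have hglobal : ∀ x, |P x| ≤ |P x0| := by
    intro x
    set k : ℤ := ⌊x / (2*π)⌋ with hk
    have h2π : 0 < 2*π := by positivity
    have h1 : 0 ≤ x - k * (2*π) := Int.sub_floor_div_mul_nonneg x h2π
    have h2 : x - k * (2*π) < 2*π := Int.sub_floor_div_mul_lt x h2π
    have h3 : P (x - k * (2*π)) = P x := hper.sub_int_mul_eq k
    have := hmax (Set.mem_Icc.2 ⟨h1, h2.le⟩)
    simpa [h3] using this
  have hMval : M = |P x0| := by
    apply le_antisymm
    · rw [hM]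
      exact ciSup_le hglobal
    · rw [hM]
      have hbdd : BddAbove (Set.range fun x => |P x|) := by
        refine ⟨|P x0|, ?_⟩
        rintro w ⟨x, rfl⟩
        exact hglobal x
      exact le_ciSup hbdd x0
  have hM0 : 0 ≤ M := hMval ▸ abs_nonneg _
  have hMb : ∀ x, |P x| ≤ M := fun x => hMval ▸ hglobal x
  rcases (abs_eq hM0).1 hMval.symm with hpos | hneg
  · refine ⟨x0, x0 + (1-θ)/n, by linarith, ?_⟩
    intro x hx
    have := key_lower n hn α β P hP M hMb x0 hpos θ hθ1 x hx
    exact le_trans this (le_abs_self _)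
  · refine ⟨x0, x0 + (1-θ)/n, by linarith, ?_⟩
    intro x hx
    have hPneg : ∀ x, -P x = ∑ m ∈ range (n+1),
        ((-α m) * Real.cos (m * x) + (-β m) * Real.sin (m * x)) := by
      intro x
      rw [hP x, ← Finset.sum_neg_distrib]
      exact Finset.sum_congr rfl (by intros; ring)
    have := key_lower n hn (fun m => -α m) (fun m => -β m) (fun x => -P x) hPneg M
      (by intro x; simpa using hMb x) x0 (by simp [hneg]) θ hθ1 x hx
    exact le_trans this (neg_le_abs _)
end

section
/- For every positive integer n, the ratio (Σ_{i=0}^n C(n,i)⁴) / (Σ_{i=0}^n C(n,i)²)² is at most (4/3)·n^{−1/2}. -/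
open Finset Real

lemma sum_sq_choose_eq (n : ℕ) :
    ∑ i ∈ range (n + 1), (n.choose i) ^ 2 = n.centralBinom := by
  rw [Nat.centralBinom_eq_two_mul_choose, two_mul, Nat.add_choose_eq,
    Finset.Nat.sum_antidiagonal_eq_sum_range_succ (fun x y => n.choose x * n.choose y) n]
  refine Finset.sum_congr rfl fun i hi => ?_
  rw [Finset.mem_range] at hi
  rw [Nat.choose_symm (Nat.lt_succ_iff.mp hi), sq]

lemma lower_cb (n : ℕ) (hn : 0 < n) : 16 ^ n ≤ 4 * n * n.centralBinom ^ 2 := by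
  induction n with
  | zero => omega
  | succ n ih =>
    rcases Nat.eq_zero_or_pos n with rfl | hp
    · simp [Nat.centralBinom]
    · have h1 := Nat.succ_mul_centralBinom_succ n
      have h2 := ih hp
      set c := n.centralBinom with hc
      set C := (n + 1).centralBinom with hC
      have e : (n + 1) ^ 2 * C ^ 2 = 4 * (2 * n + 1) ^ 2 * c ^ 2 := by
        rw [← mul_pow, h1]; ring
      have key : (n + 1) ^ 2 * 16 ^ (n + 1) ≤ (n + 1) ^ 2 * (4 * (n + 1) * C ^ 2) := by
        have l1 : (n + 1) ^ 2 * 16 ^ (n + 1) ≤ 64 * n * (n + 1) ^ 2 * c ^ 2 := by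
          calc (n + 1) ^ 2 * 16 ^ (n + 1) = 16 * (n + 1) ^ 2 * 16 ^ n := by ring
          _ ≤ 16 * (n + 1) ^ 2 * (4 * n * c ^ 2) := Nat.mul_le_mul_left _ h2
          _ = 64 * n * (n + 1) ^ 2 * c ^ 2 := by ring
        have l2 : (n + 1) ^ 2 * (4 * (n + 1) * C ^ 2)
            = 16 * (n + 1) * (2 * n + 1) ^ 2 * c ^ 2 := by
          calc (n + 1) ^ 2 * (4 * (n + 1) * C ^ 2)
              = 4 * (n + 1) * ((n + 1) ^ 2 * C ^ 2) := by ring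
          _ = 4 * (n + 1) * (4 * (2 * n + 1) ^ 2 * c ^ 2) := by rw [e]
          _ = 16 * (n + 1) * (2 * n + 1) ^ 2 * c ^ 2 := by ring
        rw [l2]
        refine le_trans l1 (Nat.mul_le_mul_right _ ?_)
        nlinarith
      exact Nat.le_of_mul_le_mul_left key (by positivity)

lemma upper_cb (n : ℕ) : (3 * n + 1) * n.centralBinom ^ 2 ≤ 16 ^ n := by
  induction n with
  | zero => simp [Nat.centralBinom]
  | succ n ih =>
    have h1 := Nat.succ_mul_centralBinom_succ n
    set c := n.centralBinom with hc
    set C := (n + 1).centralBinom with hC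
    have e : (n + 1) ^ 2 * C ^ 2 = 4 * (2 * n + 1) ^ 2 * c ^ 2 := by
      rw [← mul_pow, h1]; ring
    have key : (n + 1) ^ 2 * ((3 * (n + 1) + 1) * C ^ 2)
        ≤ (n + 1) ^ 2 * 16 ^ (n + 1) := by
      calc (n + 1) ^ 2 * ((3 * (n + 1) + 1) * C ^ 2)
          = (3 * n + 4) * ((n + 1) ^ 2 * C ^ 2) := by ring
      _ = (3 * n + 4) * (4 * (2 * n + 1) ^ 2 * c ^ 2) := by rw [e]
      _ = (4 * (3 * n + 4) * (2 * n + 1) ^ 2) * c ^ 2 := by ring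
      _ ≤ (16 * (n + 1) ^ 2 * (3 * n + 1)) * c ^ 2 := by
          refine Nat.mul_le_mul_right _ ?_; nlinarith
      _ = 16 * (n + 1) ^ 2 * ((3 * n + 1) * c ^ 2) := by ring
      _ ≤ 16 * (n + 1) ^ 2 * 16 ^ n := Nat.mul_le_mul_left _ ih
      _ = (n + 1) ^ 2 * 16 ^ (n + 1) := by ring
    exact Nat.le_of_mul_le_mul_left key (by positivity)

lemma key_ineq_s11 (n : ℕ) (hn : 0 < n) :
    9 * n * (n.choose (n / 2)) ^ 4 ≤ 16 * n.centralBinom ^ 2 := by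
  rcases Nat.even_or_odd n with he | ho
  · obtain ⟨m, rfl⟩ := he
    have hm : 0 < m := by omega
    have hd : (m + m) / 2 = m := by omega
    have hch : (m + m).choose m = m.centralBinom := by
      rw [Nat.centralBinom_eq_two_mul_choose, two_mul]
    rw [hd, hch]
    have hu := upper_cb m
    have hl := lower_cb (m + m) (by omega)
    set B := m.centralBinom with hB
    set D := (m + m).centralBinom with hD
    have hu2 : (3 * m + 1) ^ 2 * B ^ 4 ≤ 16 ^ m * 16 ^ m := by
      calc (3 * m + 1) ^ 2 * B ^ 4 = ((3 * m + 1) * B ^ 2) * ((3 * m + 1) * B ^ 2) := by ring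
      _ ≤ 16 ^ m * 16 ^ m := Nat.mul_le_mul hu hu
    have hl2 : 16 ^ m * 16 ^ m ≤ 8 * m * D ^ 2 := by
      rw [← pow_add]
      calc 16 ^ (m + m) ≤ 4 * (m + m) * D ^ 2 := hl
      _ = 8 * m * D ^ 2 := by ring
    have thu : (3 * m + 1) ^ 2 * B ^ 4 ≤ 8 * m * D ^ 2 := le_trans hu2 hl2
    have key2 : (3 * m + 1) ^ 2 * (9 * (m + m) * B ^ 4) ≤ (3 * m + 1) ^ 2 * (16 * D ^ 2) := by
      calc (3 * m + 1) ^ 2 * (9 * (m + m) * B ^ 4)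
          = (18 * m) * ((3 * m + 1) ^ 2 * B ^ 4) := by ring
      _ ≤ (18 * m) * (8 * m * D ^ 2) := Nat.mul_le_mul_left _ thu
      _ = (144 * (m * m)) * D ^ 2 := by ring
      _ ≤ (16 * (3 * m + 1) ^ 2) * D ^ 2 := Nat.mul_le_mul_right _ (by nlinarith)
      _ = (3 * m + 1) ^ 2 * (16 * D ^ 2) := by ring
    exact Nat.le_of_mul_le_mul_left key2 (by positivity)
  · obtain ⟨m, rfl⟩ := ho
    have hd : (2 * m + 1) / 2 = m := by omega
    rw [hd]
    set B := (2 * m + 1).choose m with hB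
    set D := (2 * m + 1).centralBinom with hD
    have h2B : (m + 1).centralBinom = 2 * B := by
      rw [Nat.centralBinom_eq_two_mul_choose]
      have : 2 * (m + 1) = (2 * m + 1) + 1 := by ring
      rw [this, Nat.choose_succ_succ, Nat.choose_symm_half]
      omega
    have hu := upper_cb (m + 1)
    rw [h2B] at hu
    have hu' : (3 * m + 4) * (4 * B ^ 2) ≤ 16 ^ (m + 1) := by
      calc (3 * m + 4) * (4 * B ^ 2) = (3 * (m + 1) + 1) * (2 * B) ^ 2 := by ring
      _ ≤ 16 ^ (m + 1) := hu
    have hl := lower_cb (2 * m + 1) (by omega)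
    have hu2 : 16 * ((3 * m + 4) ^ 2 * B ^ 4) ≤ 16 ^ (m + 1) * 16 ^ (m + 1) := by
      calc 16 * ((3 * m + 4) ^ 2 * B ^ 4)
          = ((3 * m + 4) * (4 * B ^ 2)) * ((3 * m + 4) * (4 * B ^ 2)) := by ring
      _ ≤ 16 ^ (m + 1) * 16 ^ (m + 1) := Nat.mul_le_mul hu' hu'
    have hl2 : 16 ^ (m + 1) * 16 ^ (m + 1) ≤ 16 * (4 * (2 * m + 1) * D ^ 2) := by
      have : 16 ^ (m + 1) * 16 ^ (m + 1) = 16 * 16 ^ (2 * m + 1) := by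
        rw [← pow_add]; ring
      rw [this]
      exact Nat.mul_le_mul_left _ hl
    have thu : (3 * m + 4) ^ 2 * B ^ 4 ≤ 4 * (2 * m + 1) * D ^ 2 :=
      Nat.le_of_mul_le_mul_left (le_trans hu2 hl2) (by norm_num)
    have key2 : (3 * m + 4) ^ 2 * (9 * (2 * m + 1) * B ^ 4)
        ≤ (3 * m + 4) ^ 2 * (16 * D ^ 2) := by
      calc (3 * m + 4) ^ 2 * (9 * (2 * m + 1) * B ^ 4)
          = (9 * (2 * m + 1)) * ((3 * m + 4) ^ 2 * B ^ 4) := by ring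
      _ ≤ (9 * (2 * m + 1)) * (4 * (2 * m + 1) * D ^ 2) := Nat.mul_le_mul_left _ thu
      _ = (36 * ((2 * m + 1) * (2 * m + 1))) * D ^ 2 := by ring
      _ ≤ (16 * (3 * m + 4) ^ 2) * D ^ 2 := Nat.mul_le_mul_right _ (by nlinarith)
      _ = (3 * m + 4) ^ 2 * (16 * D ^ 2) := by ring
    exact Nat.le_of_mul_le_mul_left key2 (by positivity)

theorem stmt11 (n : ℕ) (hn : 0 < n) :
    (∑ i ∈ range (n+1), (n.choose i : ℝ)^4) / (∑ i ∈ range (n+1), (n.choose i : ℝ)^2)^2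
      ≤ 4/3 * (n : ℝ) ^ (-(1/2) : ℝ) := by
  have hsum : (∑ i ∈ range (n + 1), (n.choose i : ℝ) ^ 2) = (n.centralBinom : ℝ) := by
    exact_mod_cast congrArg (Nat.cast (R := ℝ)) (sum_sq_choose_eq n)
  set B : ℝ := (n.choose (n / 2) : ℝ) with hBdef
  set D : ℝ := (n.centralBinom : ℝ) with hDdef
  have hD : 0 < D := by rw [hDdef]; exact_mod_cast n.centralBinom_pos
  have hB0 : 0 ≤ B := by positivity
  have hnum : (∑ i ∈ range (n + 1), (n.choose i : ℝ) ^ 4) ≤ B ^ 2 * D := by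
    rw [← hsum, Finset.mul_sum]
    refine Finset.sum_le_sum fun i _ => ?_
    have h : (n.choose i : ℝ) ≤ B := by
      rw [hBdef]; exact_mod_cast Nat.choose_le_middle i n
    have h0 : (0 : ℝ) ≤ (n.choose i : ℝ) := by positivity
    calc (n.choose i : ℝ) ^ 4 = (n.choose i : ℝ) ^ 2 * (n.choose i : ℝ) ^ 2 := by ring
    _ ≤ B ^ 2 * (n.choose i : ℝ) ^ 2 := by gcongr
  have hsqrt : 0 < Real.sqrt n := Real.sqrt_pos.mpr (by exact_mod_cast hn)
  have hkey : 9 * (n : ℝ) * B ^ 4 ≤ 16 * D ^ 2 := by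
    rw [hBdef, hDdef]; exact_mod_cast key_ineq_s11 n hn
  have h3 : 3 * Real.sqrt n * B ^ 2 ≤ 4 * D := by
    have hsq : (3 * Real.sqrt n * B ^ 2) ^ 2 ≤ (4 * D) ^ 2 := by
      have e : (Real.sqrt n) ^ 2 = (n : ℝ) := Real.sq_sqrt (by positivity)
      calc (3 * Real.sqrt n * B ^ 2) ^ 2 = 9 * ((Real.sqrt n) ^ 2) * B ^ 4 := by ring
      _ = 9 * (n : ℝ) * B ^ 4 := by rw [e]
      _ ≤ 16 * D ^ 2 := hkey
      _ = (4 * D) ^ 2 := by ring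
    have h1 : 0 ≤ 3 * Real.sqrt n * B ^ 2 := by positivity
    have h2 : 0 ≤ 4 * D := by positivity
    calc 3 * Real.sqrt n * B ^ 2 = Real.sqrt ((3 * Real.sqrt n * B ^ 2) ^ 2) :=
          (Real.sqrt_sq h1).symm
    _ ≤ Real.sqrt ((4 * D) ^ 2) := Real.sqrt_le_sqrt hsq
    _ = 4 * D := Real.sqrt_sq h2
  have hrhs : (n : ℝ) ^ (-(1/2) : ℝ) = (Real.sqrt n)⁻¹ := by
    rw [Real.rpow_neg (by positivity), Real.sqrt_eq_rpow]
  rw [hsum, hrhs]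
  calc (∑ i ∈ range (n + 1), (n.choose i : ℝ) ^ 4) / D ^ 2 ≤ (B ^ 2 * D) / D ^ 2 := by
        exact div_le_div_of_nonneg_right hnum (by positivity) |>.trans_eq rfl
  _ = B ^ 2 / D := by field_simp
  _ ≤ 4 / (3 * Real.sqrt n) := by
      rw [div_le_div_iff₀ hD (by positivity)]
      nlinarith [h3]
  _ = 4 / 3 * (Real.sqrt n)⁻¹ := by
      rw [div_eq_mul_inv, mul_inv]
      ring
end

section
/- For each n ≥ 1, let ε_0, …, ε_n be independent random signs, each equal to +1 or −1 with probability 1/2, let P_n(x) = Σ_{m=0}^n C(n,m) ε_m cos(mx), and let R_n = Σ_{m=0}^n C(n,m)² and T_n = Σ_{m=0}^n C(n,m)⁴. Then for any real λ, the expectation E[ (1/(2π)) ∫_0^{2π} e^{λ P_n(x)} dx ] is at least e^{(1/4)λ² R_n − λ⁴ T_n}. -/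
open MeasureTheory Finset Filter Real

/-- `T_n = ∑_{m=0}^n C(n,m)⁴`. -/
noncomputable def T (n : ℕ) : ℝ :=
  ∑ m ∈ range (n+1), (n.choose m : ℝ)^4

section analysis

lemma nonneg_of_hasDerivAt (f f' : ℝ → ℝ) (hd : ∀ t, HasDerivAt f (f' t) t)
    (h0 : f 0 = 0) (h' : ∀ t, 0 ≤ t → 0 ≤ f' t) {t : ℝ} (ht : 0 ≤ t) : 0 ≤ f t := by
  have hmono : MonotoneOn f (Set.Ici (0:ℝ)) := by
    apply monotoneOn_of_deriv_nonneg (convex_Ici 0)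
    · exact fun x _ => (hd x).continuousAt.continuousWithinAt
    · exact fun x _ => ((hd x).differentiableAt).differentiableWithinAt
    · intro x hx
      rw [(hd x).deriv]
      exact h' x (le_of_lt (by simpa using hx))
  calc (0:ℝ) = f 0 := h0.symm
  _ ≤ f t := hmono Set.self_mem_Ici ht ht

lemma q_nonneg {t : ℝ} (ht : 0 ≤ t) : 0 ≤ t * Real.cosh t - (1 - t^2/3) * Real.sinh t := by
  apply nonneg_of_hasDerivAt _ (fun t => t^2/3 * Real.cosh t + (5*t/3) * Real.sinh t) _ (by simp) _ ht
  · intro s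
    have h1 : HasDerivAt (fun u : ℝ => u * Real.cosh u) (1 * Real.cosh s + s * Real.sinh s) s :=
      (hasDerivAt_id s).mul (Real.hasDerivAt_cosh s)
    have h2 : HasDerivAt (fun u : ℝ => (1 - u^2/3) * Real.sinh u)
        ((0 - 2*s^1/3) * Real.sinh s + (1 - s^2/3) * Real.cosh s) s := by
      have hp : HasDerivAt (fun u : ℝ => 1 - u^2/3) (0 - 2*s^1/3) s := by
        have := ((hasDerivAt_pow 2 s).div_const 3)
        exact ((hasDerivAt_const s (1:ℝ)).sub this).congr_deriv (by push_cast; ring)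
      exact hp.mul (Real.hasDerivAt_sinh s)
    have := h1.sub h2
    exact this.congr_deriv (by ring)
  · intro s hs
    have : 0 ≤ Real.sinh s := Real.sinh_nonneg_iff.2 hs
    have hc := (Real.cosh_pos (x := s)).le
    positivity

lemma p_nonneg {t : ℝ} (ht : 0 ≤ t) : 0 ≤ Real.sinh t - (t - t^3/3) * Real.cosh t := by
  apply nonneg_of_hasDerivAt _
    (fun u => u * (u * Real.cosh u - (1 - u^2/3) * Real.sinh u)) _ (by simp) _ ht
  · intro s
    have h2 : HasDerivAt (fun u : ℝ => (u - u^3/3) * Real.cosh u)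
        ((1 - 3*s^2/3) * Real.cosh s + (s - s^3/3) * Real.sinh s) s := by
      have hp : HasDerivAt (fun u : ℝ => u - u^3/3) (1 - 3*s^2/3) s := by
        have := ((hasDerivAt_pow 3 s).div_const 3)
        exact ((hasDerivAt_id s).sub this).congr_deriv (by push_cast; ring)
      exact hp.mul (Real.hasDerivAt_cosh s)
    have := (Real.hasDerivAt_sinh s).sub h2
    exact this.congr_deriv (by ring)
  · intro s hs
    exact mul_nonneg hs (q_nonneg hs)

lemma log_cosh_ge {t : ℝ} (ht : 0 ≤ t) : 0 ≤ Real.log (Real.cosh t) - t^2/2 + t^4/12 := by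
  apply nonneg_of_hasDerivAt _
    (fun u => (Real.sinh u - (u - u^3/3) * Real.cosh u) / Real.cosh u) _ (by simp) _ ht
  · intro s
    have hc : Real.cosh s ≠ 0 := (Real.cosh_pos s).ne'
    have h1 : HasDerivAt (fun u : ℝ => Real.log (Real.cosh u)) (Real.sinh s / Real.cosh s) s :=
      (Real.hasDerivAt_cosh s).log hc
    have h2 : HasDerivAt (fun u : ℝ => u^2/2) (2*s^1/2) s := (hasDerivAt_pow 2 s).div_const 2
    have h3 : HasDerivAt (fun u : ℝ => u^4/12) (4*s^3/12) s := (hasDerivAt_pow 4 s).div_const 12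
    have := (h1.sub h2).add h3
    exact this.congr_deriv (by field_simp; ring)
  · intro s hs
    exact div_nonneg (p_nonneg hs) (Real.cosh_pos s).le

lemma exp_le_cosh (t : ℝ) : Real.exp (t^2/2 - t^4/12) ≤ Real.cosh t := by
  have key : ∀ s : ℝ, 0 ≤ s → Real.exp (s^2/2 - s^4/12) ≤ Real.cosh s := by
    intro s hs
    have h := log_cosh_ge hs
    have : s^2/2 - s^4/12 ≤ Real.log (Real.cosh s) := by linarith
    calc Real.exp (s^2/2 - s^4/12) ≤ Real.exp (Real.log (Real.cosh s)) := Real.exp_le_exp.2 this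
    _ = Real.cosh s := Real.exp_log (Real.cosh_pos s)
  rcases le_or_gt 0 t with h | h
  · exact key t h
  · have := key (-t) (by linarith)
    simpa [show ((-t):ℝ)^4 = t^4 by ring, show ((-t):ℝ)^2 = t^2 by ring] using this

lemma Icos2_ge (m : ℕ) : π ≤ ∫ x in (0:ℝ)..(2*π), Real.cos (m*x)^2 := by
  have hπ := Real.pi_pos
  rcases Nat.eq_zero_or_pos m with h | h
  · subst h
    simp only [Nat.cast_zero, zero_mul, Real.cos_zero, one_pow]
    rw [intervalIntegral.integral_const]
    simp only [smul_eq_mul, sub_zero, mul_one]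
    linarith
  · have hm : (m:ℝ) ≠ 0 := Nat.cast_ne_zero.2 h.ne'
    have hcomp := intervalIntegral.integral_comp_mul_left (a := (0:ℝ)) (b := 2*π)
      (fun u => Real.cos u ^ 2) hm
    rw [hcomp, mul_zero, integral_cos_sq]
    have hsin : Real.sin ((m:ℝ) * (2*π)) = 0 := by
      have h2 : (m:ℝ) * (2*π) = ((2*m : ℕ) : ℝ) * π := by push_cast; ring
      rw [h2, Real.sin_nat_mul_pi]
    rw [hsin, smul_eq_mul, Real.sin_zero, Real.cos_zero]
    have hval : ((m:ℝ))⁻¹ * ((Real.cos ((m:ℝ)*(2*π)) * 0 - 1 * 0 + (m:ℝ) * (2*π) - 0) / 2) = π := by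
      field_simp
      ring
    rw [hval]

end analysis

theorem stmt12 (n : ℕ) (hn : 1 ≤ n) (l : ℝ) :
    (∫ ω, ((1/(2*π)) * ∫ x in (0:ℝ)..(2*π), Real.exp (l * P n ω x)) ∂(signs n))
      ≥ Real.exp (1/4 * l^2 * R n - l^4 * T n) := by
  have hπ : 0 < π := Real.pi_pos
  set c : ℝ := 1/4 * l^2 * R n - l^4 * T n with hcdef
  set w : ℝ := ((2:ℝ)^(n+1))⁻¹ with hw
  -- continuity facts
  have hPcont : ∀ ω : Fin (n+1) → Bool, Continuous (fun x => Real.exp (l * P n ω x)) := by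
    intro ω
    apply Real.continuous_exp.comp
    apply continuous_const.mul
    unfold P
    exact continuous_finset_sum _ fun m _ =>
      continuous_const.mul (Real.continuous_cos.comp (continuous_const.mul continuous_id))
  -- step 1 : the ω-integral is a weighted sum
  rw [ge_iff_le, signs, PMF.integral_eq_sum]
  have hwval : ∀ ω : Fin (n+1) → Bool,
      ((PMF.uniformOfFintype (Fin (n+1) → Bool)) ω).toReal = w := by
    intro ω
    rw [PMF.uniformOfFintype_apply]
    have hcard : (Fintype.card (Fin (n+1) → Bool)) = 2^(n+1) := by
      simp [Fintype.card_fun]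
    rw [hcard]
    simp [w, ENNReal.toReal_inv]
  simp only [smul_eq_mul, hwval]
  -- step 2 : swap sum and integral
  have hswap : ∑ ω : Fin (n+1) → Bool, w * ((1/(2*π)) * ∫ x in (0:ℝ)..(2*π), Real.exp (l * P n ω x))
      = (1/(2*π)) * ∫ x in (0:ℝ)..(2*π), ∑ ω : Fin (n+1) → Bool, w * Real.exp (l * P n ω x) := by
    rw [intervalIntegral.integral_finset_sum
      (fun ω _ => (Continuous.intervalIntegrable (u := fun x => w * Real.exp (l * P n ω x)) (continuous_const.mul (hPcont ω)) _ _)), Finset.mul_sum]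
    apply Finset.sum_congr rfl
    intro ω _
    rw [intervalIntegral.integral_const_mul]
    ring
  rw [hswap]
  -- key pointwise identity : the weighted sum is a product of cosh's
  have hSx : ∀ x : ℝ, (∑ ω : Fin (n+1) → Bool, w * Real.exp (l * P n ω x))
      = ∏ m : Fin (n+1), Real.cosh (l * (n.choose (m:ℕ) : ℝ) * Real.cos ((m:ℕ) * x)) := by
    intro x
    set F : Fin (n+1) → Bool → ℝ := fun m b =>
      (1:ℝ)/2 * Real.exp ((l * (n.choose (m:ℕ) : ℝ) * Real.cos ((m:ℕ) * x)) * (if b then (1:ℝ) else -1))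
      with hF
    have h1 : ∀ ω : Fin (n+1) → Bool, w * Real.exp (l * P n ω x)
        = ∏ m : Fin (n+1), F m (ω m) := by
      intro ω
      simp only [hF]
      rw [Finset.prod_mul_distrib, Finset.prod_const, ← Real.exp_sum]
      congr 1
      · rw [Finset.card_univ, Fintype.card_fin]
        rw [hw, one_div, inv_pow]
      · unfold P
        rw [Finset.mul_sum]
        congr 1
        apply Finset.sum_congr rfl
        intro m _
        unfold eps
        split_ifs <;> ring
    simp_rw [h1]
    rw [← Fintype.prod_sum]
    apply Finset.prod_congr rfl
    intro m _
    rw [Fintype.sum_bool]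
    simp only [hF]
    norm_num
    rw [Real.cosh_eq]
    ring
  -- the lower-bounding functions
  set g : ℝ → ℝ := fun x => ∑ m : Fin (n+1),
    ((l * (n.choose (m:ℕ) : ℝ) * Real.cos ((m:ℕ) * x))^2/2
      - (l * (n.choose (m:ℕ) : ℝ) * Real.cos ((m:ℕ) * x))^4/12) with hg
  set h : ℝ → ℝ := fun x => ∑ m : Fin (n+1),
    ((l * (n.choose (m:ℕ) : ℝ))^2/2 * Real.cos ((m:ℕ) * x)^2
      - (l * (n.choose (m:ℕ) : ℝ))^4/12) with hh
  have hhcont : Continuous h := by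
    apply continuous_finset_sum
    intro m _
    exact (continuous_const.mul ((Real.continuous_cos.comp
      (continuous_const.mul continuous_id)).pow 2)).sub continuous_const
  -- pointwise inequality
  have hpoint : ∀ x : ℝ, Real.exp c * (h x - c + 1)
      ≤ ∑ ω : Fin (n+1) → Bool, w * Real.exp (l * P n ω x) := by
    intro x
    rw [hSx x]
    have hhg : h x ≤ g x := by
      apply Finset.sum_le_sum
      intro m _
      have hcos : Real.cos ((m:ℕ) * x)^2 ≤ 1 := Real.cos_sq_le_one _
      have hcos0 : (0:ℝ) ≤ Real.cos ((m:ℕ) * x)^2 := sq_nonneg _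
      have hA : (0:ℝ) ≤ (l * (n.choose (m:ℕ) : ℝ))^4 := by positivity
      have key : (l * (n.choose (m:ℕ) : ℝ) * Real.cos ((m:ℕ) * x))^4
          ≤ (l * (n.choose (m:ℕ) : ℝ))^4 := by
        have : (l * (n.choose (m:ℕ) : ℝ) * Real.cos ((m:ℕ) * x))^4
            = (l * (n.choose (m:ℕ) : ℝ))^4 * (Real.cos ((m:ℕ) * x)^2)^2 := by ring
        rw [this]
        exact mul_le_of_le_one_right hA (by nlinarith)
      have keysq : (l * (n.choose (m:ℕ) : ℝ) * Real.cos ((m:ℕ) * x))^2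
          = (l * (n.choose (m:ℕ) : ℝ))^2 * Real.cos ((m:ℕ) * x)^2 := by ring
      rw [keysq] at *
      linarith
    have h2 : Real.exp c * (g x - c + 1) ≤ Real.exp (g x) := by
      have hle := Real.add_one_le_exp (g x - c)
      calc Real.exp c * (g x - c + 1) ≤ Real.exp c * Real.exp (g x - c) :=
            mul_le_mul_of_nonneg_left hle (Real.exp_pos c).le
      _ = Real.exp (g x) := by rw [← Real.exp_add]; ring_nf
    have h3 : Real.exp (g x) ≤ ∏ m : Fin (n+1),
        Real.cosh (l * (n.choose (m:ℕ) : ℝ) * Real.cos ((m:ℕ) * x)) := by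
      rw [hg, Real.exp_sum]
      exact Finset.prod_le_prod (fun m _ => (Real.exp_pos _).le) (fun m _ => exp_le_cosh _)
    have h1 : Real.exp c * (h x - c + 1) ≤ Real.exp c * (g x - c + 1) :=
      mul_le_mul_of_nonneg_left (by linarith) (Real.exp_pos c).le
    linarith
  -- integral lower bound
  have hScont : Continuous (fun x => ∑ ω : Fin (n+1) → Bool, w * Real.exp (l * P n ω x)) :=
    continuous_finset_sum _ fun ω _ => continuous_const.mul (hPcont ω)
  have hlowcont : Continuous (fun x => Real.exp c * (h x - c + 1)) :=
    continuous_const.mul ((hhcont.sub continuous_const).add continuous_const)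
  have hmono : ∫ x in (0:ℝ)..(2*π), Real.exp c * (h x - c + 1)
      ≤ ∫ x in (0:ℝ)..(2*π), ∑ ω : Fin (n+1) → Bool, w * Real.exp (l * P n ω x) := by
    apply intervalIntegral.integral_mono_on (by linarith)
      (hlowcont.intervalIntegrable _ _) (hScont.intervalIntegrable _ _)
    intro x _
    exact hpoint x
  -- compute / bound the lower integral
  have hinth : ∫ x in (0:ℝ)..(2*π), h x = ∑ m : Fin (n+1),
      ((l * (n.choose (m:ℕ) : ℝ))^2/2 * (∫ x in (0:ℝ)..(2*π), Real.cos ((m:ℕ)*x)^2)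
        - (2*π) * ((l * (n.choose (m:ℕ) : ℝ))^4/12)) := by
    have hInt1 : ∀ m : Fin (n+1), IntervalIntegrable
        (fun x => (l * (n.choose (m:ℕ) : ℝ))^2/2 * Real.cos ((m:ℕ) * x)^2) volume 0 (2*π) :=
      fun m => (Continuous.intervalIntegrable (by fun_prop) _ _)
    have hInt : ∀ m : Fin (n+1), IntervalIntegrable
        (fun x => (l * (n.choose (m:ℕ) : ℝ))^2/2 * Real.cos ((m:ℕ) * x)^2
          - (l * (n.choose (m:ℕ) : ℝ))^4/12) volume 0 (2*π) :=
      fun m => (hInt1 m).sub intervalIntegrable_const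
    rw [hh]
    rw [intervalIntegral.integral_finset_sum (fun m _ => hInt m)]
    apply Finset.sum_congr rfl
    intro m _
    rw [intervalIntegral.integral_sub (hInt1 m) intervalIntegrable_const,
      intervalIntegral.integral_const_mul, intervalIntegral.integral_const]
    rw [smul_eq_mul, sub_zero]
  have hT0 : 0 ≤ T n := Finset.sum_nonneg fun m _ => by positivity
  have hinth_ge : 2*π*c ≤ ∫ x in (0:ℝ)..(2*π), h x := by
    rw [hinth]
    have step : ∑ m : Fin (n+1), ((l * (n.choose (m:ℕ) : ℝ))^2/2 * π
        - (2*π) * ((l * (n.choose (m:ℕ) : ℝ))^4/12))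
        ≤ ∑ m : Fin (n+1), ((l * (n.choose (m:ℕ) : ℝ))^2/2 * (∫ x in (0:ℝ)..(2*π), Real.cos ((m:ℕ)*x)^2)
        - (2*π) * ((l * (n.choose (m:ℕ) : ℝ))^4/12)) := by
      apply Finset.sum_le_sum
      intro m _
      have := Icos2_ge (m : ℕ)
      have hA : (0:ℝ) ≤ (l * (n.choose (m:ℕ) : ℝ))^2/2 := by positivity
      nlinarith
    have hval : ∑ m : Fin (n+1), ((l * (n.choose (m:ℕ) : ℝ))^2/2 * π
        - (2*π) * ((l * (n.choose (m:ℕ) : ℝ))^4/12))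
        = π/2 * l^2 * R n - π/6 * l^4 * T n := by
      rw [R, T, ← Fin.sum_univ_eq_sum_range (fun m => ((n.choose m : ℝ))^2) (n+1),
        ← Fin.sum_univ_eq_sum_range (fun m => ((n.choose m : ℝ))^4) (n+1),
        Finset.mul_sum, Finset.mul_sum, ← Finset.sum_sub_distrib]
      apply Finset.sum_congr rfl
      intro m _
      ring
    rw [hval] at step
    have hl4T : 0 ≤ l^4 * T n := mul_nonneg (by positivity) hT0
    have : 2*π*c ≤ π/2 * l^2 * R n - π/6 * l^4 * T n := by
      rw [hcdef]
      nlinarith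
    linarith
  -- finish
  have hintlow : ∫ x in (0:ℝ)..(2*π), Real.exp c * (h x - c + 1)
      = Real.exp c * ((∫ x in (0:ℝ)..(2*π), h x) + (2*π) * (1 - c)) := by
    rw [intervalIntegral.integral_const_mul]
    congr 1
    have : (fun x => h x - c + 1) = (fun x => h x + (1 - c)) := by funext x; ring
    rw [this, intervalIntegral.integral_add (hhcont.intervalIntegrable _ _)
      intervalIntegrable_const, intervalIntegral.integral_const]
    rw [smul_eq_mul, sub_zero]
  have hfinal : 2*π*Real.exp c ≤ ∫ x in (0:ℝ)..(2*π),
      ∑ ω : Fin (n+1) → Bool, w * Real.exp (l * P n ω x) := by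
    have h1 : 2*π*Real.exp c ≤ Real.exp c * ((∫ x in (0:ℝ)..(2*π), h x) + (2*π) * (1 - c)) := by
      have h2 : (2*π : ℝ) ≤ (∫ x in (0:ℝ)..(2*π), h x) + (2*π) * (1 - c) := by linarith
      calc 2*π*Real.exp c = Real.exp c * (2*π) := by ring
      _ ≤ _ := mul_le_mul_of_nonneg_left h2 (Real.exp_pos c).le
    linarith [hintlow ▸ hmono]
  have hpos : (0:ℝ) < 1/(2*π) := by positivity
  calc Real.exp c = (1/(2*π)) * (2*π*Real.exp c) := by field_simp
  _ ≤ (1/(2*π)) * ∫ x in (0:ℝ)..(2*π), ∑ ω : Fin (n+1) → Bool, w * Real.exp (l * P n ω x) :=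
      mul_le_mul_of_nonneg_left hfinal hpos.le
end

section
/- For each n ≥ 1, let ε_0, …, ε_n be independent random signs, each equal to +1 or −1 with probability 1/2, let P_n(x) = Σ_{m=0}^n C(n,m) ε_m cos(mx), let M_n = sup_{0 ≤ x ≤ 2π} |P_n(x)|, and let R_n = Σ_{m=0}^n C(n,m)². Then for any real λ > 0 and any θ with 0 < θ < 1, the expectation E[ e^{θ λ M_n} ] is at most (4π/(1−θ)) · n · e^{(1/2)λ² R_n}. -/
open MeasureTheory Finset Filter Real

noncomputable def trig (N : ℕ) (a b : Fin (N+1) → ℝ) (x : ℝ) : ℝ :=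
  ∑ m : Fin (N+1), (a m * Real.cos (m * x) + b m * Real.sin (m * x))

noncomputable def trigD (N : ℕ) (a b : Fin (N+1) → ℝ) (x : ℝ) : ℝ :=
  ∑ m : Fin (N+1), (-(a m) * m * Real.sin (m * x) + b m * m * Real.cos (m * x))

lemma trig_hasDerivAt_s18 (N : ℕ) (a b : Fin (N+1) → ℝ) (x : ℝ) :
    HasDerivAt (trig N a b) (trigD N a b x) x := by
  have : ∀ m : Fin (N+1), HasDerivAt (fun y => a m * Real.cos (m * y) + b m * Real.sin (m * y))
      (-(a m) * m * Real.sin (m * x) + b m * m * Real.cos (m * x)) x := by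
    intro m
    have hc : HasDerivAt (fun y : ℝ => (m : ℝ) * y) (m : ℝ) x := by
      simpa using (hasDerivAt_id x).const_mul (m : ℝ)
    have h1 := ((Real.hasDerivAt_cos ((m:ℝ) * x)).comp x hc).const_mul (a m)
    have h2 := ((Real.hasDerivAt_sin ((m:ℝ) * x)).comp x hc).const_mul (b m)
    exact (h1.add h2).congr_deriv (by ring)
  exact HasDerivAt.fun_sum (u := Finset.univ) (fun m _ => this m)

lemma trig_continuous (N : ℕ) (a b : Fin (N+1) → ℝ) : Continuous (trig N a b) := by
  unfold trig
  exact continuous_finset_sum _ fun m _ => by fun_prop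

noncomputable def trigQ (N : ℕ) (a b : Fin (N+1) → ℝ) : Polynomial ℂ :=
  ∑ m : Fin (N+1), (Polynomial.C ((a m - b m * Complex.I)/2) * Polynomial.X ^ (N + (m:ℕ))
    + Polynomial.C ((a m + b m * Complex.I)/2) * Polynomial.X ^ (N - (m:ℕ)))

lemma trigQ_natDegree_le (N : ℕ) (a b : Fin (N+1) → ℝ) : (trigQ N a b).natDegree ≤ 2 * N := by
  apply Polynomial.natDegree_sum_le_of_forall_le
  intro m _
  apply le_trans (Polynomial.natDegree_add_le _ _)
  apply max_le
  · apply le_trans (Polynomial.natDegree_C_mul_le _ _)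
    simpa [Polynomial.natDegree_X_pow] using by omega
  · apply le_trans (Polynomial.natDegree_C_mul_le _ _)
    simpa [Polynomial.natDegree_X_pow] using by omega

lemma trigQ_eval (N : ℕ) (a b : Fin (N+1) → ℝ) (x : ℝ) :
    (trigQ N a b).eval (Complex.exp (x * Complex.I))
      = Complex.exp (N * x * Complex.I) * (trig N a b x : ℂ) := by
  rw [trigQ, Polynomial.eval_finset_sum, trig]
  push_cast
  rw [Finset.mul_sum]
  apply Finset.sum_congr rfl
  intro m _
  have hm : (m : ℕ) ≤ N := Nat.lt_succ_iff.mp m.2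
  simp only [Polynomial.eval_add, Polynomial.eval_mul, Polynomial.eval_C, Polynomial.eval_pow,
    Polynomial.eval_X]
  rw [← Complex.exp_nat_mul, ← Complex.exp_nat_mul]
  have h1 : ((N + (m:ℕ) : ℕ) : ℂ) * (x * Complex.I) = N * x * Complex.I + (m:ℕ) * x * Complex.I := by
    push_cast; ring
  have h2 : ((N - (m:ℕ) : ℕ) : ℂ) * (x * Complex.I) = N * x * Complex.I + (-((m:ℕ) * x)) * Complex.I := by
    rw [Nat.cast_sub hm]; ring
  rw [h1, h2, Complex.exp_add, Complex.exp_add]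
  simp only [Complex.exp_mul_I, Complex.cos_neg, Complex.sin_neg]
  linear_combination ((Complex.cos ((N:ℂ) * x) + Complex.sin ((N:ℂ) * x) * Complex.I) * (-(b m:ℂ) * Complex.sin ((m:ℕ) * x))) * Complex.I_sq

lemma exp_I_injOn {c : ℝ} : Set.InjOn (fun x : ℝ => Complex.exp (x * Complex.I))
    (Set.Ico c (c + 2*π)) := by
  intro x hx y hy hxy
  replace hxy : Complex.exp (x * Complex.I) = Complex.exp (y * Complex.I) := hxy
  have h1 : Complex.exp ((x - y) * Complex.I) = 1 := by
    rw [sub_mul, Complex.exp_sub, hxy, div_self (Complex.exp_ne_zero _)]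
  rw [Complex.exp_eq_one_iff] at h1
  obtain ⟨k, hk⟩ := h1
  have hk' : (x:ℂ) - y = k * (2*π) := by
    have : ((x:ℂ) - y) * Complex.I = (k * (2*π)) * Complex.I := by
      rw [hk]; push_cast; ring
    exact mul_right_cancel₀ Complex.I_ne_zero this
  have hkr : x - y = k * (2*π) := by exact_mod_cast hk'
  have h2 : |x - y| < 2*π := by
    rw [abs_sub_lt_iff]
    constructor <;> [skip; skip] <;>
    · simp only [Set.mem_Ico] at hx hy; linarith
  have : k = 0 := by
    by_contra hk0
    have : (1:ℝ) ≤ |(k:ℝ)| := by exact_mod_cast Int.one_le_abs (by exact_mod_cast hk0)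
    have h2π : (0:ℝ) < 2*π := by positivity
    have : (2*π) ≤ |(k:ℝ)| * (2*π) := le_mul_of_one_le_left h2π.le this
    rw [hkr, abs_mul, abs_of_pos h2π] at h2
    linarith
  have : x - y = 0 := by rw [hkr, this]; simp
  linarith

lemma trig_zeros_card_le (N : ℕ) (a b : Fin (N+1) → ℝ) {x₀ : ℝ} (h0 : trig N a b x₀ ≠ 0)
    (c : ℝ) (s : Finset ℝ) (hz : ∀ x ∈ s, trig N a b x = 0)
    (hin : ∀ x ∈ s, x ∈ Set.Ico c (c + 2*π)) : s.card ≤ 2*N := by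
  have hq0 : trigQ N a b ≠ 0 := by
    intro h
    have := trigQ_eval N a b x₀
    rw [h] at this
    simp only [Polynomial.eval_zero] at this
    have := (mul_eq_zero.mp this.symm).resolve_left (Complex.exp_ne_zero _)
    exact h0 (by exact_mod_cast this)
  set f : ℝ → ℂ := fun x => Complex.exp (x * Complex.I) with hf
  have hinj : Set.InjOn f s := fun x hx y hy h =>
    exp_I_injOn (hin x hx) (hin y hy) h
  have himage : s.image f ⊆ (trigQ N a b).roots.toFinset := by
    intro z hzmem
    obtain ⟨x, hx, rfl⟩ := Finset.mem_image.mp hzmem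
    rw [Multiset.mem_toFinset, Polynomial.mem_roots hq0]
    rw [Polynomial.IsRoot, hf]
    simp only
    rw [trigQ_eval, hz x hx]
    simp
  calc s.card = (s.image f).card := (Finset.card_image_of_injOn hinj).symm
    _ ≤ (trigQ N a b).roots.toFinset.card := Finset.card_le_card himage
    _ ≤ Multiset.card (trigQ N a b).roots := Multiset.toFinset_card_le _
    _ ≤ (trigQ N a b).natDegree := Polynomial.card_roots' _
    _ ≤ 2*N := trigQ_natDegree_le N a b

lemma trig_neg (N : ℕ) (a b : Fin (N+1) → ℝ) (x : ℝ) :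
    trig N (fun m => -a m) (fun m => -b m) x = - trig N a b x := by
  rw [trig, trig, ← Finset.sum_neg_distrib]
  exact Finset.sum_congr rfl fun m _ => by ring

lemma trigD_neg (N : ℕ) (a b : Fin (N+1) → ℝ) (x : ℝ) :
    trigD N (fun m => -a m) (fun m => -b m) x = - trigD N a b x := by
  rw [trigD, trigD, ← Finset.sum_neg_distrib]
  exact Finset.sum_congr rfl fun m _ => by ring

set_option maxHeartbeats 1000000 in
lemma bernstein_aux (N : ℕ) (hN : 1 ≤ N) (a b : Fin (N+1) → ℝ) (Mb : ℝ)
    (hM : ∀ x, |trig N a b x| ≤ Mb) (ξ : ℝ) (hD : (N:ℝ) * Mb < trigD N a b ξ) : False := by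
  have hNpos : (0:ℝ) < N := by exact_mod_cast hN
  have hMb0 : 0 ≤ Mb := le_trans (abs_nonneg _) (hM 0)
  have hMbpos : 0 < Mb := by
    rcases hMb0.lt_or_eq with h | h
    · exact h
    · exfalso
      have hz : trig N a b = fun _ => (0:ℝ) := by
        funext x
        have := hM x; rw [← h] at this
        exact abs_nonpos_iff.mp this
      have h0 : trigD N a b ξ = 0 := by
        have h1 := trig_hasDerivAt_s18 N a b ξ
        rw [hz] at h1
        exact h1.unique (hasDerivAt_const _ _)
      rw [h0, ← h] at hD
      simp at hD
  obtain ⟨D, hDdef⟩ : ∃ D, D = trigD N a b ξ := ⟨_, rfl⟩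
  rw [← hDdef] at hD
  have hDpos : 0 < D := lt_of_le_of_lt (by positivity) hD
  obtain ⟨lam, hlam⟩ : ∃ l, l = ((N:ℝ) * Mb + D) / (2 * D) := ⟨_, rfl⟩
  have hlam0 : 0 < lam := by rw [hlam]; positivity
  have hlam1 : lam < 1 := by rw [hlam, div_lt_one (by positivity)]; linarith
  have hlamD : (N:ℝ) * Mb < lam * D := by
    have : lam * D = ((N:ℝ) * Mb + D)/2 := by rw [hlam]; field_simp
    rw [this]; linarith
  obtain ⟨u, hu⟩ : ∃ u, u = lam * trig N a b ξ / Mb := ⟨_, rfl⟩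
  have hu1 : |u| < 1 := by
    rw [hu, abs_div, abs_of_pos hMbpos, div_lt_one hMbpos, abs_mul, abs_of_pos hlam0]
    calc lam * |trig N a b ξ| ≤ lam * Mb := mul_le_mul_of_nonneg_left (hM ξ) hlam0.le
      _ < 1 * Mb := mul_lt_mul_of_pos_right hlam1 hMbpos
      _ = Mb := one_mul _
  obtain ⟨hunl, hunr⟩ := abs_lt.mp hu1
  obtain ⟨α, halpha⟩ : ∃ α, α = Real.arcsin u := ⟨_, rfl⟩
  have hαlt : α < π/2 := halpha ▸ Real.arcsin_lt_pi_div_two.mpr hunr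
  have hαgt : -(π/2) < α := halpha ▸ Real.neg_pi_div_two_lt_arcsin.mpr hunl
  have hsinα : Real.sin α = u := halpha ▸ Real.sin_arcsin hunl.le hunr.le
  have hcosα : Real.cos α ≤ 1 := Real.cos_le_one _
  obtain ⟨S, hS⟩ : ∃ S : ℝ → ℝ, ∀ x, S x = Mb * Real.sin ((N:ℝ)*(x - ξ) + α) :=
    ⟨_, fun _ => rfl⟩
  obtain ⟨g, hgdef⟩ : ∃ g : ℝ → ℝ, ∀ x, g x = lam * trig N a b x - S x := ⟨_, fun _ => rfl⟩
  have hgξ : g ξ = 0 := by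
    rw [hgdef, hS, show (N:ℝ)*(ξ-ξ) + α = α by ring, hsinα, hu]
    field_simp
    ring
  have hSder : ∀ x, HasDerivAt S (Mb * ((N:ℝ) * Real.cos ((N:ℝ)*(x-ξ) + α))) x := by
    intro x
    have hc : HasDerivAt (fun y : ℝ => (N:ℝ)*(y - ξ) + α) ((N:ℝ)) x := by
      simpa using (((hasDerivAt_id x).sub_const ξ).const_mul (N:ℝ)).add_const α
    have h := ((Real.hasDerivAt_sin ((N:ℝ)*(x-ξ) + α)).comp x hc).const_mul Mb
    have heq : S = fun x => Mb * Real.sin ((N:ℝ)*(x - ξ) + α) := funext hS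
    rw [heq]
    exact h.congr_deriv (by ring)
  have hgder : HasDerivAt g (lam * D - Mb * ((N:ℝ) * Real.cos α)) ξ := by
    have h1 := (trig_hasDerivAt_s18 N a b ξ).const_mul lam
    have h2 := hSder ξ
    rw [show (N:ℝ)*(ξ-ξ) + α = α by ring] at h2
    have heq : g = fun x => lam * trig N a b x - S x := funext hgdef
    rw [heq, hDdef]
    exact h1.sub h2
  have hg'pos : 0 < lam * D - Mb * ((N:ℝ) * Real.cos α) := by
    have : Mb * ((N:ℝ) * Real.cos α) ≤ Mb * ((N:ℝ) * 1) :=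
      mul_le_mul_of_nonneg_left (mul_le_mul_of_nonneg_left hcosα (by positivity)) hMb0
    nlinarith
  obtain ⟨y, hy⟩ : ∃ y : ℕ → ℝ, ∀ j, y j = ξ + (-(π/2) - α + j*π)/(N:ℝ) := ⟨_, fun _ => rfl⟩
  have hyval : ∀ j : ℕ, S (y j) = -((-1)^j * Mb) := by
    intro j
    rw [hS, hy]
    rw [show (N:ℝ) * (ξ + (-(π/2) - α + j*π)/(N:ℝ) - ξ) + α = -(π/2) + j*π by
      field_simp; ring]
    rw [Real.sin_add_nat_mul_pi, Real.sin_neg, Real.sin_pi_div_two]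
    ring
  have hgy_even : ∀ j : ℕ, Even j → 0 < g (y j) := by
    intro j hj
    rw [hgdef, hyval j, hj.neg_one_pow]
    have h1 : -Mb ≤ trig N a b (y j) := (abs_le.mp (hM (y j))).1
    nlinarith [mul_le_mul_of_nonneg_left h1 hlam0.le]
  have hgy_odd : ∀ j : ℕ, Odd j → g (y j) < 0 := by
    intro j hj
    rw [hgdef, hyval j, hj.neg_one_pow]
    have h1 : trig N a b (y j) ≤ Mb := (abs_le.mp (hM (y j))).2
    nlinarith [mul_le_mul_of_nonneg_left h1 hlam0.le]
  have hymono : StrictMono y := by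
    intro i j hij
    rw [hy, hy]
    have hij' : (i:ℝ) < j := by exact_mod_cast hij
    have hππ : (i:ℝ)*π < j*π := by nlinarith [Real.pi_pos]
    have h2 : (-(π/2) - α + i*π)/(N:ℝ) < (-(π/2) - α + j*π)/(N:ℝ) := by
      apply div_lt_div_of_pos_right ?_ hNpos
      linarith
    linarith
  have hy0ξ : y 0 < ξ := by
    rw [hy]
    simp only [Nat.cast_zero, zero_mul, add_zero]
    have h1 : (-(π/2) - α) < 0 := by linarith
    have := div_neg_of_neg_of_pos h1 hNpos
    linarith
  have hξy1 : ξ < y 1 := by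
    rw [hy]
    simp only [Nat.cast_one, one_mul]
    have h1 : 0 < (-(π/2) - α + π) := by linarith [Real.pi_pos]
    have := div_pos h1 hNpos
    linarith
  have hyspace : ∀ j : ℕ, y (j+1) = y j + π/(N:ℝ) := by
    intro j
    rw [hy, hy]
    push_cast
    field_simp
    ring
  have hy2N : y (2*N) = y 0 + 2*π := by
    rw [hy, hy]
    push_cast
    field_simp
    ring
  have hScont : Continuous S := by
    rw [funext hS]; fun_prop
  have hgc : Continuous g := by
    rw [funext hgdef]
    exact (continuous_const.mul (trig_continuous N a b)).sub hScont
  -- pick δ > 0 with g (ξ - δ) < 0 < g (ξ + δ)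
  obtain ⟨ε, hε, hslope⟩ : ∃ ε > 0, ∀ t, dist t ξ < ε → t ≠ ξ → 0 < slope g ξ t := by
    have h1 : Filter.Tendsto (slope g ξ) (nhdsWithin ξ {ξ}ᶜ)
        (nhds (lam * D - Mb * ((N:ℝ) * Real.cos α))) :=
      hasDerivAt_iff_tendsto_slope.mp hgder
    have h2 : ∀ᶠ t in nhdsWithin ξ {ξ}ᶜ, 0 < slope g ξ t :=
      h1.eventually (eventually_gt_nhds hg'pos)
    rw [eventually_nhdsWithin_iff] at h2
    rw [Metric.eventually_nhds_iff] at h2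
    obtain ⟨ε, hε, h⟩ := h2
    exact ⟨ε, hε, fun t ht htn => h ht htn⟩
  obtain ⟨δ, hδpos, hδε, hδ1, hδ2⟩ :
      ∃ δ, 0 < δ ∧ δ < ε ∧ y 0 < ξ - δ ∧ ξ + δ < y 1 := by
    refine ⟨min (ε/2) (min ((ξ - y 0)/2) ((y 1 - ξ)/2)), ?_, ?_, ?_, ?_⟩
    · have h1 : 0 < ε/2 := by linarith
      have h2 : 0 < (ξ - y 0)/2 := by linarith
      have h3 : 0 < (y 1 - ξ)/2 := by linarith
      exact lt_min h1 (lt_min h2 h3)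
    · exact lt_of_le_of_lt (min_le_left _ _) (by linarith)
    · have : min (ε/2) (min ((ξ - y 0)/2) ((y 1 - ξ)/2)) ≤ (ξ - y 0)/2 :=
        le_trans (min_le_right _ _) (min_le_left _ _)
      linarith
    · have : min (ε/2) (min ((ξ - y 0)/2) ((y 1 - ξ)/2)) ≤ (y 1 - ξ)/2 :=
        le_trans (min_le_right _ _) (min_le_right _ _)
      linarith
  have hgneg : g (ξ - δ) < 0 := by
    have hs := hslope (ξ - δ) (by rw [Real.dist_eq, abs_of_nonpos (by linarith)]; linarith)
      (by intro h; have := congrArg id h; simp at this; linarith)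
    rw [slope_def_field, hgξ, sub_zero, show ξ - δ - ξ = -δ by ring] at hs
    rcases div_pos_iff.mp hs with ⟨h1, h2⟩ | ⟨h1, h2⟩
    · linarith
    · exact h1
  have hgpos : 0 < g (ξ + δ) := by
    have hs := hslope (ξ + δ) (by rw [Real.dist_eq, abs_of_nonneg (by linarith)]; linarith)
      (by intro h; have := congrArg id h; simp at this; linarith)
    rw [slope_def_field, hgξ, sub_zero, show ξ + δ - ξ = δ by ring] at hs
    rcases div_pos_iff.mp hs with ⟨h1, h2⟩ | ⟨h1, h2⟩
    · exact h1
    · linarith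
  -- zeros between consecutive grid points
  have hw : ∀ j : ℕ, ∃ w, w ∈ Set.Ioo (y j) (y (j+1)) ∧ g w = 0 := by
    intro j
    have hle : y j ≤ y (j+1) := (hymono (Nat.lt_succ_self j)).le
    rcases Nat.even_or_odd j with hj | hj
    · obtain ⟨w, hw1, hw2⟩ := intermediate_value_Ioo' hle hgc.continuousOn
        (Set.mem_Ioo.mpr ⟨hgy_odd (j+1) (Even.add_one hj), hgy_even j hj⟩)
      exact ⟨w, hw1, hw2⟩
    · obtain ⟨w, hw1, hw2⟩ := intermediate_value_Ioo hle hgc.continuousOn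
        (Set.mem_Ioo.mpr ⟨hgy_odd j hj, hgy_even (j+1) (Odd.add_one hj)⟩)
      exact ⟨w, hw1, hw2⟩
  choose w hw1 hw2 using hw
  obtain ⟨z₁, hz₁mem, hz₁⟩ : ∃ z, z ∈ Set.Ioo (y 0) (ξ - δ) ∧ g z = 0 := by
    obtain ⟨z, h1, h2⟩ := intermediate_value_Ioo' hδ1.le hgc.continuousOn
      (Set.mem_Ioo.mpr ⟨hgneg, hgy_even 0 Even.zero⟩)
    exact ⟨z, h1, h2⟩
  obtain ⟨z₃, hz₃mem, hz₃⟩ : ∃ z, z ∈ Set.Ioo (ξ + δ) (y 1) ∧ g z = 0 := by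
    obtain ⟨z, h1, h2⟩ := intermediate_value_Ioo' hδ2.le hgc.continuousOn
      (Set.mem_Ioo.mpr ⟨hgy_odd 1 odd_one, hgpos⟩)
    exact ⟨z, h1, h2⟩
  -- g is a trig polynomial
  obtain ⟨φ, hφ⟩ : ∃ φ, φ = α - N*ξ := ⟨_, rfl⟩
  have hgtrig : ∀ x, g x = trig N
      (fun m => lam * a m - (if m = Fin.last N then Mb * Real.sin φ else 0))
      (fun m => lam * b m - (if m = Fin.last N then Mb * Real.cos φ else 0)) x := by
    intro x
    rw [hgdef, trig, trig]
    have e1 : ∀ m : Fin (N+1),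
        (lam * a m - (if m = Fin.last N then Mb * Real.sin φ else 0)) * Real.cos (m*x)
        + (lam * b m - (if m = Fin.last N then Mb * Real.cos φ else 0)) * Real.sin (m*x)
        = (lam * (a m * Real.cos (m*x) + b m * Real.sin (m*x)))
          - (if m = Fin.last N then Mb * Real.sin φ * Real.cos (m*x)
              + Mb * Real.cos φ * Real.sin (m*x) else 0) := by
      intro m
      by_cases h : m = Fin.last N <;> simp [h] <;> ring
    rw [Finset.sum_congr rfl (fun m _ => e1 m), Finset.sum_sub_distrib, ← Finset.mul_sum]
    rw [Finset.sum_ite_eq' Finset.univ (Fin.last N)]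
    simp only [Finset.mem_univ, if_true, Fin.val_last]
    rw [hS, show (N:ℝ)*(x-ξ)+α = (N:ℝ)*x + φ by rw [hφ]; ring, Real.sin_add]
    ring
  have hne0 : trig N
      (fun m => lam * a m - (if m = Fin.last N then Mb * Real.sin φ else 0))
      (fun m => lam * b m - (if m = Fin.last N then Mb * Real.cos φ else 0)) (y 1) ≠ 0 := by
    rw [← hgtrig]
    exact ne_of_lt (hgy_odd 1 odd_one)
  -- ordering facts
  have horder1 : z₁ < ξ := by have := hz₁mem.2; linarith
  have horder2 : ξ < z₃ := by have := hz₃mem.1; linarith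
  have horder3 : z₃ < y 1 := hz₃mem.2
  have hwlow : ∀ j, 1 ≤ j → y 1 ≤ y j := fun j hj => hymono.monotone hj
  -- the finset of zeros
  have himinj : Set.InjOn w (Finset.Icc 1 (2*N-1) : Finset ℕ) := by
    intro i _ j _ hij
    by_contra hne
    rcases lt_or_gt_of_ne hne with h | h
    · have h1 : w i < y (i+1) := (hw1 i).2
      have h2 : y (i+1) ≤ y j := hymono.monotone (by omega)
      have h3 : y j < w j := (hw1 j).1
      linarith [hij.le, hij.ge]
    · have h1 : w j < y (j+1) := (hw1 j).2
      have h2 : y (j+1) ≤ y i := hymono.monotone (by omega)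
      have h3 : y i < w i := (hw1 i).1
      linarith [hij.le, hij.ge]
  have himcard : ((Finset.Icc 1 (2*N-1)).image w).card = 2*N - 1 := by
    rw [Finset.card_image_of_injOn himinj, Nat.card_Icc]
    omega
  have hz₃nim : z₃ ∉ (Finset.Icc 1 (2*N-1)).image w := by
    intro hmem
    obtain ⟨j, hj, hwj⟩ := Finset.mem_image.mp hmem
    have h1 : y 1 ≤ y j := hwlow j (Finset.mem_Icc.mp hj).1
    have h2 : y j < w j := (hw1 j).1
    linarith [hwj ▸ (by linarith : z₃ < y j)]
  have hξnim : ξ ∉ (Finset.Icc 1 (2*N-1)).image w := by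
    intro hmem
    obtain ⟨j, hj, hwj⟩ := Finset.mem_image.mp hmem
    have h1 : y 1 ≤ y j := hwlow j (Finset.mem_Icc.mp hj).1
    have h2 : y j < w j := (hw1 j).1
    linarith [hwj ▸ (by linarith : ξ < y j)]
  have hz₁nim : z₁ ∉ (Finset.Icc 1 (2*N-1)).image w := by
    intro hmem
    obtain ⟨j, hj, hwj⟩ := Finset.mem_image.mp hmem
    have h1 : y 1 ≤ y j := hwlow j (Finset.mem_Icc.mp hj).1
    have h2 : y j < w j := (hw1 j).1
    linarith [hwj ▸ (by linarith : z₁ < y j)]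
  have hcard : (insert z₁ (insert ξ (insert z₃ ((Finset.Icc 1 (2*N-1)).image w)))).card
      = 2*N + 2 := by
    rw [Finset.card_insert_of_notMem, Finset.card_insert_of_notMem,
      Finset.card_insert_of_notMem hz₃nim, himcard]
    · omega
    · simp only [Finset.mem_insert]
      push_neg
      exact ⟨ne_of_lt horder2, hξnim⟩
    · simp only [Finset.mem_insert]
      push_neg
      exact ⟨ne_of_lt horder1, ne_of_lt (by linarith), hz₁nim⟩
  -- all elements are zeros in the window
  have hzeros : ∀ x ∈ insert z₁ (insert ξ (insert z₃ ((Finset.Icc 1 (2*N-1)).image w))),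
      trig N
        (fun m => lam * a m - (if m = Fin.last N then Mb * Real.sin φ else 0))
        (fun m => lam * b m - (if m = Fin.last N then Mb * Real.cos φ else 0)) x = 0 := by
    intro x hx
    rw [← hgtrig]
    simp only [Finset.mem_insert, Finset.mem_image] at hx
    rcases hx with rfl | rfl | rfl | ⟨j, _, rfl⟩
    exacts [hz₁, hgξ, hz₃, hw2 j]
  have hwindow : ∀ x ∈ insert z₁ (insert ξ (insert z₃ ((Finset.Icc 1 (2*N-1)).image w))),
      x ∈ Set.Ico (y 0) (y 0 + 2*π) := by
    intro x hx
    rw [← hy2N]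
    simp only [Finset.mem_insert, Finset.mem_image] at hx
    have h12N : y 1 ≤ y (2*N) := hymono.monotone (by omega)
    rcases hx with rfl | rfl | rfl | ⟨j, hj, rfl⟩
    · exact ⟨hz₁mem.1.le, by linarith⟩
    · exact ⟨hy0ξ.le, by linarith⟩
    · exact ⟨by linarith [hz₃mem.1], by linarith⟩
    · obtain ⟨hj1, hj2⟩ := Finset.mem_Icc.mp hj
      have h1 : y 0 ≤ y j := hymono.monotone (Nat.zero_le _)
      have h2 : w j < y (j+1) := (hw1 j).2
      have h3 : y (j+1) ≤ y (2*N) := hymono.monotone (by omega)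
      exact ⟨by linarith [(hw1 j).1], by linarith⟩
  have hfinal := trig_zeros_card_le N _ _ hne0 (y 0)
    (insert z₁ (insert ξ (insert z₃ ((Finset.Icc 1 (2*N-1)).image w)))) hzeros hwindow
  rw [hcard] at hfinal
  omega

lemma trig_bernstein (N : ℕ) (hN : 1 ≤ N) (a b : Fin (N+1) → ℝ) (Mb : ℝ)
    (hM : ∀ x, |trig N a b x| ≤ Mb) (ξ : ℝ) : |trigD N a b ξ| ≤ (N:ℝ) * Mb := by
  by_contra hcon
  push_neg at hcon
  rcases lt_or_ge (trigD N a b ξ) 0 with h | h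
  · apply bernstein_aux N hN (fun m => -a m) (fun m => -b m) Mb
      (fun x => by rw [trig_neg]; simpa using hM x) ξ
    rw [trigD_neg]
    rw [abs_of_neg h] at hcon
    linarith
  · exact bernstein_aux N hN a b Mb hM ξ (by rwa [abs_of_nonneg h] at hcon)

lemma P_eq_trig (n : ℕ) (ω : Fin (n+1) → Bool) (x : ℝ) :
    P n ω x = trig n (fun m => (n.choose m : ℝ) * eps ω m) (fun _ => 0) x := by
  rw [P, trig]
  exact Finset.sum_congr rfl fun m _ => by ring

lemma P_continuous (n : ℕ) (ω : Fin (n+1) → Bool) : Continuous (P n ω) := by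
  rw [funext (P_eq_trig n ω)]
  exact trig_continuous _ _ _

lemma P_periodic (n : ℕ) (ω : Fin (n+1) → Bool) : Function.Periodic (P n ω) (2*π) := by
  intro x
  rw [P, P]
  refine Finset.sum_congr rfl fun m _ => ?_
  rw [mul_add, Real.cos_add_nat_mul_two_pi]

lemma exists_max (n : ℕ) (ω : Fin (n+1) → Bool) :
    ∃ x₀ ∈ Set.Icc (0:ℝ) (2*π), M n ω = |P n ω x₀| ∧ ∀ x : ℝ, |P n ω x| ≤ |P n ω x₀| := by
  have h2π : (0:ℝ) < 2*π := by positivity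
  have hne : (Set.Icc (0:ℝ) (2*π)).Nonempty := Set.nonempty_Icc.mpr h2π.le
  obtain ⟨x₀, hx₀mem, hx₀max'⟩ := isCompact_Icc.exists_isMaxOn hne
    (continuous_abs.comp (P_continuous n ω)).continuousOn
  have hx₀max : ∀ z ∈ Set.Icc (0:ℝ) (2*π), |P n ω z| ≤ |P n ω x₀| := fun z hz => hx₀max' hz
  have hball : ∀ x : ℝ, |P n ω x| ≤ |P n ω x₀| := by
    intro x
    obtain ⟨y, hy, hxy⟩ := (P_periodic n ω).exists_mem_Ico h2π x 0
    rw [hxy]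
    refine hx₀max y ?_
    rw [zero_add] at hy
    exact ⟨hy.1, hy.2.le⟩
  have hnemp : Nonempty (Set.Icc (0:ℝ) (2*π)) := hne.to_subtype
  refine ⟨x₀, hx₀mem, ?_, hball⟩
  rw [M]
  apply le_antisymm
  · exact ciSup_le fun z => hx₀max z.1 z.2
  · have hbdd : BddAbove (Set.range fun z : Set.Icc (0:ℝ) (2*π) => |P n ω z.1|) := by
      refine ⟨|P n ω x₀|, ?_⟩
      rintro v ⟨z, rfl⟩
      exact hx₀max z.1 z.2
    exact le_ciSup hbdd (⟨x₀, hx₀mem⟩ : Set.Icc (0:ℝ) (2*π))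

lemma M_nonneg (n : ℕ) (ω : Fin (n+1) → Bool) : 0 ≤ M n ω := by
  obtain ⟨x₀, _, hM, _⟩ := exists_max n ω
  rw [hM]
  exact abs_nonneg _

lemma per_omega (n : ℕ) (hn : 1 ≤ n) (ω : Fin (n+1) → Bool) (l θ : ℝ)
    (hl : 0 < l) (hθ0 : 0 < θ) (hθ1 : θ < 1) :
    Real.exp (θ * l * M n ω)
      ≤ (n / (1-θ)) * ∫ x in (0:ℝ)..(2*π), Real.exp (l * |P n ω x|) := by
  obtain ⟨x₀, hx₀mem, hMeq, hbound⟩ := exists_max n ω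
  have hnpos : (0:ℝ) < n := by exact_mod_cast hn
  have hπ : (3:ℝ) < π := Real.pi_gt_three
  have hPT : P n ω = trig n (fun m => (n.choose m : ℝ) * eps ω m) (fun _ => 0) :=
    funext (P_eq_trig n ω)
  have hMb : ∀ x, |trig n (fun m => (n.choose m : ℝ) * eps ω m) (fun _ => 0) x| ≤ M n ω := by
    intro x
    rw [← hPT, hMeq]
    exact hbound x
  have hder := trig_bernstein n hn _ _ (M n ω) hMb
  have hc0 : (0:ℝ) < (1-θ)/n := div_pos (by linarith) hnpos
  have hc1 : (1-θ)/n ≤ 2*π := by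
    have h1 : (1-θ)/n ≤ 1-θ := by
      apply div_le_self (by linarith) (by exact_mod_cast hn)
    linarith
  have key : ∀ x ∈ Set.Icc x₀ (x₀ + (1-θ)/n), θ * M n ω ≤ |P n ω x| := by
    intro x hx
    have hd := norm_image_sub_le_of_norm_deriv_le_segment'
      (f' := trigD n (fun m => (n.choose m : ℝ) * eps ω m) (fun _ => 0))
      (fun y _ => (trig_hasDerivAt_s18 n _ _ y).hasDerivWithinAt)
      (C := n * M n ω) (fun y _ => hder y) x hx
    rw [← hPT] at hd
    have h1 : |P n ω x - P n ω x₀| ≤ (1-θ) * M n ω := by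
      refine le_trans hd ?_
      have hxx : x - x₀ ≤ (1-θ)/n := by linarith [hx.2]
      have hMn : 0 ≤ (n:ℝ) * M n ω := mul_nonneg hnpos.le (M_nonneg n ω)
      calc (n:ℝ) * M n ω * (x - x₀) ≤ (n:ℝ) * M n ω * ((1-θ)/n) := by
            exact mul_le_mul_of_nonneg_left hxx hMn
        _ = (1-θ) * M n ω := by field_simp
    have h2 := abs_sub_abs_le_abs_sub (P n ω x₀) (P n ω x)
    rw [abs_sub_comm] at h1
    have h3 : |P n ω x₀| - |P n ω x| ≤ (1-θ) * M n ω := le_trans h2 h1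
    rw [← hMeq] at h3
    linarith
  have hintegrable : ∀ u v : ℝ, IntervalIntegrable
      (fun x => Real.exp (l * |P n ω x|)) volume u v := by
    intro u v
    apply Continuous.intervalIntegrable
    have := P_continuous n ω
    fun_prop
  have hper : Function.Periodic (fun x => Real.exp (l * |P n ω x|)) (2*π) := by
    intro x
    simp only [P_periodic n ω x]
  have hshift : ∫ x in (0:ℝ)..(2*π), Real.exp (l * |P n ω x|)
      = ∫ x in x₀..(x₀ + 2*π), Real.exp (l * |P n ω x|) := by
    have := hper.intervalIntegral_add_eq x₀ 0
    rw [zero_add] at this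
    exact this.symm
  have hsplit : ∫ x in x₀..(x₀ + (1-θ)/n), Real.exp (l * |P n ω x|)
      ≤ ∫ x in x₀..(x₀ + 2*π), Real.exp (l * |P n ω x|) := by
    rw [← intervalIntegral.integral_add_adjacent_intervals (hintegrable x₀ (x₀ + (1-θ)/n))
      (hintegrable (x₀ + (1-θ)/n) (x₀ + 2*π))]
    have h0 : 0 ≤ ∫ x in (x₀ + (1-θ)/n)..(x₀ + 2*π), Real.exp (l * |P n ω x|) := by
      apply intervalIntegral.integral_nonneg (by linarith)
      intro u _
      positivity
    linarith
  have hlower : ((1-θ)/n) * Real.exp (θ * l * M n ω)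
      ≤ ∫ x in x₀..(x₀ + (1-θ)/n), Real.exp (l * |P n ω x|) := by
    have hmono := intervalIntegral.integral_mono_on (μ := volume)
      (f := fun _ => Real.exp (θ * l * M n ω)) (g := fun x => Real.exp (l * |P n ω x|))
      (by linarith : x₀ ≤ x₀ + (1-θ)/n)
      (intervalIntegrable_const) (hintegrable _ _) ?_
    · rw [intervalIntegral.integral_const] at hmono
      simpa [smul_eq_mul, show x₀ + (1-θ)/n - x₀ = (1-θ)/n by ring] using hmono
    · intro x hx
      rw [Real.exp_le_exp]
      have := key x hx
      nlinarith [M_nonneg n ω]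
  rw [hshift]
  have h4 : Real.exp (θ * l * M n ω)
      ≤ (n/(1-θ)) * ∫ x in x₀..(x₀ + (1-θ)/n), Real.exp (l * |P n ω x|) := by
    rw [← mul_le_mul_iff_right₀ hc0]
    have heq : (1-θ)/(n:ℝ) * ((n:ℝ)/(1-θ)
        * ∫ x in x₀..(x₀ + (1-θ)/n), Real.exp (l * |P n ω x|))
        = ∫ x in x₀..(x₀ + (1-θ)/n), Real.exp (l * |P n ω x|) := by
      have hθne : (1-θ) ≠ 0 := by linarith
      have hnne : (n:ℝ) ≠ 0 := hnpos.ne'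
      field_simp
    rw [heq]
    exact hlower
  refine le_trans h4 ?_
  have hfac : (0:ℝ) ≤ (n:ℝ)/(1-θ) := div_nonneg hnpos.le (by linarith)
  exact mul_le_mul_of_nonneg_left hsplit hfac

lemma hoeffding (n : ℕ) (t : ℝ) (x : ℝ) :
    ∑ ω : Fin (n+1) → Bool, Real.exp (t * P n ω x)
      ≤ 2^(n+1) * Real.exp (t^2 * R n / 2) := by
  have h1 : ∀ ω : Fin (n+1) → Bool, Real.exp (t * P n ω x)
      = ∏ m : Fin (n+1), Real.exp (t * ((n.choose m : ℝ) * Real.cos ((m:ℕ) * x)) * eps ω m) := by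
    intro ω
    rw [P, Finset.mul_sum, Real.exp_sum]
    refine Finset.prod_congr rfl fun m _ => ?_
    congr 1
    ring
  calc ∑ ω : Fin (n+1) → Bool, Real.exp (t * P n ω x)
      = ∑ ω : Fin (n+1) → Bool, ∏ m : Fin (n+1),
        Real.exp (t * ((n.choose m : ℝ) * Real.cos ((m:ℕ) * x)) * (if ω m then (1:ℝ) else -1)) := by
        refine Finset.sum_congr rfl fun ω _ => ?_
        rw [h1 ω]
        rfl
    _ = ∏ m : Fin (n+1), ∑ b : Bool,
        Real.exp (t * ((n.choose m : ℝ) * Real.cos ((m:ℕ) * x)) * (if b then (1:ℝ) else -1)) :=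
        (Fintype.prod_sum (fun (m : Fin (n+1)) (b : Bool) =>
          Real.exp (t * ((n.choose m : ℝ) * Real.cos ((m:ℕ) * x)) * (if b then (1:ℝ) else -1)))).symm
    _ = ∏ m : Fin (n+1), 2 * Real.cosh (t * ((n.choose m : ℝ) * Real.cos ((m:ℕ) * x))) := by
        refine Finset.prod_congr rfl fun m _ => ?_
        rw [Fintype.sum_bool, Real.cosh_eq]
        norm_num
        ring
    _ ≤ ∏ m : Fin (n+1), 2 * Real.exp ((t * ((n.choose m : ℝ) * Real.cos ((m:ℕ) * x)))^2 / 2) := by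
        apply Finset.prod_le_prod
        · intro m _
          positivity
        · intro m _
          have := Real.cosh_le_exp_half_sq (t * ((n.choose m:ℝ) * Real.cos ((m:ℕ)*x)))
          linarith
    _ = 2^(n+1) * Real.exp (∑ m : Fin (n+1),
          (t * ((n.choose m:ℝ) * Real.cos ((m:ℕ)*x)))^2/2) := by
        rw [Finset.prod_mul_distrib, Finset.prod_const, ← Real.exp_sum]
        simp [Finset.card_univ]
    _ ≤ 2^(n+1) * Real.exp (t^2 * R n / 2) := by
        apply mul_le_mul_of_nonneg_left _ (by positivity)
        rw [Real.exp_le_exp]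
        have hsum : ∑ m : Fin (n+1), (t * ((n.choose m:ℝ) * Real.cos ((m:ℕ)*x)))^2/2
            ≤ ∑ m : Fin (n+1), t^2 * (n.choose (m:ℕ):ℝ)^2 / 2 := by
          apply Finset.sum_le_sum
          intro m _
          have hc2 : Real.cos ((m:ℕ)*x)^2 ≤ 1 := Real.cos_sq_le_one _
          nlinarith [sq_nonneg (t*(n.choose (m:ℕ):ℝ)), sq_nonneg (Real.cos ((m:ℕ)*x))]
        refine le_trans hsum (le_of_eq ?_)
        rw [R, ← Fin.sum_univ_eq_sum_range (fun m => (n.choose m:ℝ)^2) (n+1),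
          Finset.mul_sum, Finset.sum_div]

lemma my_exp_abs_le (z : ℝ) : Real.exp |z| ≤ Real.exp z + Real.exp (-z) := by
  rcases abs_cases z with ⟨h, _⟩ | ⟨h, _⟩ <;> rw [h]
  · linarith [Real.exp_pos (-z)]
  · linarith [Real.exp_pos z]

theorem stmt18 (n : ℕ) (hn : 1 ≤ n) (l θ : ℝ) (hl : 0 < l) (hθ0 : 0 < θ) (hθ1 : θ < 1) :
    (∫ ω, Real.exp (θ * l * M n ω) ∂(signs n))
      ≤ 4 * π / (1 - θ) * n * Real.exp (1/2 * l^2 * R n) := by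
  have h2π : (0:ℝ) < 2*π := by positivity
  have hnpos : (0:ℝ) < n := by exact_mod_cast hn
  have hcard : (Fintype.card (Fin (n+1) → Bool)) = 2^(n+1) := by
    simp [Fintype.card_fun]
  have hw : ∀ ω : Fin (n+1) → Bool, ((PMF.uniformOfFintype (Fin (n+1) → Bool)) ω).toReal
      = ((2:ℝ)^(n+1))⁻¹ := by
    intro ω
    rw [PMF.uniformOfFintype_apply, hcard]
    simp
  have hPint : ∀ ω : Fin (n+1) → Bool, ∀ u v : ℝ, IntervalIntegrable
      (fun x => Real.exp (l * |P n ω x|)) volume u v := by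
    intro ω u v
    apply Continuous.intervalIntegrable
    have := P_continuous n ω
    fun_prop
  rw [signs, PMF.integral_eq_sum]
  calc ∑ ω : Fin (n+1) → Bool,
        ((PMF.uniformOfFintype (Fin (n+1) → Bool)) ω).toReal • Real.exp (θ*l*M n ω)
      = ∑ ω : Fin (n+1) → Bool, ((2:ℝ)^(n+1))⁻¹ * Real.exp (θ*l*M n ω) := by
        exact Finset.sum_congr rfl fun ω _ => by rw [hw ω, smul_eq_mul]
    _ ≤ ∑ ω : Fin (n+1) → Bool, ((2:ℝ)^(n+1))⁻¹ *
          (((n:ℝ)/(1-θ)) * ∫ x in (0:ℝ)..(2*π), Real.exp (l * |P n ω x|)) := by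
        refine Finset.sum_le_sum fun ω _ => ?_
        exact mul_le_mul_of_nonneg_left (per_omega n hn ω l θ hl hθ0 hθ1) (by positivity)
    _ = (((2:ℝ)^(n+1))⁻¹ * ((n:ℝ)/(1-θ))) *
          ∫ x in (0:ℝ)..(2*π), (∑ ω : Fin (n+1) → Bool, Real.exp (l * |P n ω x|)) := by
        rw [intervalIntegral.integral_finset_sum (fun ω _ => hPint ω 0 (2*π)),
          mul_assoc, ← Finset.mul_sum, ← Finset.mul_sum]
    _ ≤ (((2:ℝ)^(n+1))⁻¹ * ((n:ℝ)/(1-θ))) *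
          (2*π * ((2:ℝ)^(n+1) * (2 * Real.exp (l^2 * R n / 2)))) := by
        have hfac : (0:ℝ) ≤ ((2:ℝ)^(n+1))⁻¹ * ((n:ℝ)/(1-θ)) := by
          apply mul_nonneg (by positivity)
          exact div_nonneg hnpos.le (by linarith)
        apply mul_le_mul_of_nonneg_left _ hfac
        have hpoint : ∀ x ∈ Set.Icc (0:ℝ) (2*π),
            (∑ ω : Fin (n+1) → Bool, Real.exp (l * |P n ω x|))
            ≤ (2:ℝ)^(n+1) * (2 * Real.exp (l^2 * R n / 2)) := by
          intro x _
          have step1 : ∀ ω : Fin (n+1) → Bool, Real.exp (l * |P n ω x|)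
              ≤ Real.exp (l * P n ω x) + Real.exp ((-l) * P n ω x) := by
            intro ω
            have : l * |P n ω x| = |l * P n ω x| := by
              rw [abs_mul, abs_of_pos hl]
            rw [this, show (-l) * P n ω x = -(l * P n ω x) by ring]
            exact my_exp_abs_le _
          calc ∑ ω : Fin (n+1) → Bool, Real.exp (l * |P n ω x|)
              ≤ ∑ ω : Fin (n+1) → Bool,
                (Real.exp (l * P n ω x) + Real.exp ((-l) * P n ω x)) :=
                Finset.sum_le_sum fun ω _ => step1 ω
            _ = (∑ ω : Fin (n+1) → Bool, Real.exp (l * P n ω x))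
                + ∑ ω : Fin (n+1) → Bool, Real.exp ((-l) * P n ω x) := Finset.sum_add_distrib
            _ ≤ 2^(n+1) * Real.exp (l^2 * R n / 2) + 2^(n+1) * Real.exp ((-l)^2 * R n / 2) :=
                add_le_add (hoeffding n l x) (hoeffding n (-l) x)
            _ = (2:ℝ)^(n+1) * (2 * Real.exp (l^2 * R n / 2)) := by
                rw [show (-l)^2 = l^2 by ring]
                ring
        have hsumcont : Continuous (fun x => ∑ ω : Fin (n+1) → Bool, Real.exp (l * |P n ω x|)) := by
          apply continuous_finset_sum
          intro ω _
          have := P_continuous n ω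
          fun_prop
        have := intervalIntegral.integral_mono_on (μ := volume) h2π.le
          (hsumcont.intervalIntegrable 0 (2*π)) intervalIntegrable_const hpoint
        rw [intervalIntegral.integral_const, smul_eq_mul, sub_zero] at this
        exact this
    _ = 4 * π / (1 - θ) * n * Real.exp (1/2 * l^2 * R n) := by
        rw [show l^2 * R n / 2 = 1/2 * l^2 * R n by ring]
        have h2ne : ((2:ℝ)^(n+1)) ≠ 0 := by positivity
        have hθne : (1:ℝ)-θ ≠ 0 := by linarith
        field_simp
        ring
end
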